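/- arXiv:1812.05482 — 8 statements merged into one kernel-verified Lean document; each statement's English description precedes it below -/
import Mathlib

section
/- A separable metric space (X, ρ) can be isometrically embedded into the real Hilbert space ℓ² (i.e., there exists a map φ : X → ℓ² with ‖φ(x) − φ(y)‖ = ρ(x,y) for all x, y ∈ X) if and only if, for every n ≥ 2 and every (n+1)-tuple of points x₀, x₁, …, xₙ in X, the n × n real matrix whose (j,k) entry is ρ(x₀,x_j)² + ρ(x₀,x_k)² − ρ(x_j,x_k)² is positive semidefinite. -/
open scoped RealInnerProductSpace
open Matrix

noncomputable section MengerSchoenbergAux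


lemma ms_apply_eq_zero {E : Type*} [NormedAddCommGroup E] [InnerProductSpace ℝ E]
    (T : E →ₗ[ℝ] E) (hsym : ∀ x y, ⟪T x, y⟫ = ⟪x, T y⟫) (hpos : ∀ x, 0 ≤ ⟪x, T x⟫)
    {u : E} (hu : ⟪u, T u⟫ = 0) : T u = 0 := by
  have key : ∀ y : E, ⟪y, T u⟫ = 0 := by
    intro y
    set A := ⟪y, T u⟫ with hA
    have hB : 0 ≤ ⟪y, T y⟫ := hpos y
    set B := ⟪y, T y⟫ with hBdef
    have h2 : ∀ s : ℝ, 0 ≤ 2 * s * A + s ^ 2 * B := by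
      intro s
      have := hpos (u + s • y)
      have hexp : ⟪u + s • y, T (u + s • y)⟫ = 2 * s * A + s ^ 2 * B := by
        rw [map_add, _root_.map_smul]
        rw [inner_add_left, inner_add_right, inner_add_right]
        rw [real_inner_smul_left, real_inner_smul_left, real_inner_smul_right,
          real_inner_smul_right]
        have h1 : ⟪u, T y⟫ = A := by rw [hA, ← hsym u y, real_inner_comm]
        rw [hu, h1]
        simp only [← hA, ← hBdef]
        ring
      linarith [hexp ▸ this]
    have hs := h2 (-(A / (B + 1)))
    by_contra hA0
    have hBpos : (0:ℝ) < B + 1 := by linarith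
    have hA2 : 0 < A ^ 2 := by positivity
    have hval : 2 * (-(A / (B + 1))) * A + (-(A / (B + 1))) ^ 2 * B
        = -(A ^ 2 * (B + 2)) / (B + 1) ^ 2 := by
      field_simp
      ring
    rw [hval] at hs
    have hneg : -(A ^ 2 * (B + 2)) / (B + 1) ^ 2 < 0 :=
      div_neg_of_neg_of_pos (by nlinarith) (by positivity)
    linarith
  have := key (T u)
  rwa [real_inner_self_eq_norm_sq, pow_eq_zero_iff (by norm_num), norm_eq_zero] at this

lemma ms_solve {E : Type*} [NormedAddCommGroup E] [InnerProductSpace ℝ E]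
    [FiniteDimensional ℝ E]
    (T : E →ₗ[ℝ] E) (hsym : ∀ x y, ⟪T x, y⟫ = ⟪x, T y⟫) (hpos : ∀ x, 0 ≤ ⟪x, T x⟫)
    (g : E) (hker : ∀ x, T x = 0 → ⟪g, x⟫ = 0) : ∃ a, T a = g := by
  set R := LinearMap.range T with hR
  haveI : CompleteSpace R := FiniteDimensional.complete ℝ R
  have horth : Rᗮᗮ = R := Submodule.orthogonal_orthogonal R
  have hg : g ∈ Rᗮᗮ := by
    rw [Submodule.mem_orthogonal]
    intro u hu
    have hTu : ⟪T u, u⟫ = 0 := by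
      rw [Submodule.mem_orthogonal] at hu
      exact hu (T u) (LinearMap.mem_range_self T u)
    have : T u = 0 := ms_apply_eq_zero T hsym hpos (by rw [real_inner_comm]; exact hTu)
    rw [real_inner_comm]
    exact hker u this
  rw [horth] at hg
  exact hg




abbrev MSH := lp (fun _ : ℕ => ℝ) 2

-- quadratic trick: if 0 ≤ 2sA + s²B for all s, and 0 ≤ B, then A = 0
lemma ms_quad {A B : ℝ} (hB : 0 ≤ B) (h : ∀ s : ℝ, 0 ≤ 2 * s * A + s ^ 2 * B) :
    A = 0 := by
  by_contra hA0
  have hBpos : (0:ℝ) < B + 1 := by linarith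
  have hA2 : 0 < A ^ 2 := by positivity
  have hs := h (-(A / (B + 1)))
  have hval : 2 * (-(A / (B + 1))) * A + (-(A / (B + 1))) ^ 2 * B
      = -(A ^ 2 * (B + 2)) / (B + 1) ^ 2 := by
    field_simp
    ring
  rw [hval] at hs
  have hneg : -(A ^ 2 * (B + 2)) / (B + 1) ^ 2 < 0 :=
    div_neg_of_neg_of_pos (by nlinarith) (by positivity)
  linarith

lemma ms_exists_next (n : ℕ) (w : Fin n → MSH) (g : Fin n → ℝ) (t : ℝ)
    (hw : ∀ (j : Fin n) (i : ℕ), (j : ℕ) < i → w j i = 0)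
    (hpsd : ∀ (c : Fin n → ℝ) (s : ℝ),
      0 ≤ (∑ j, ∑ k, c j * c k * ⟪w j, w k⟫) + 2 * s * (∑ j, c j * g j) + s ^ 2 * t) :
    ∃ v : MSH, (∀ j, ⟪w j, v⟫ = g j) ∧ ⟪v, v⟫ = t ∧ ∀ i : ℕ, n < i → v i = 0 := by
  classical
  set G : Matrix (Fin n) (Fin n) ℝ := Matrix.of fun j k => ⟪w j, w k⟫ with hG
  set T : EuclideanSpace ℝ (Fin n) →ₗ[ℝ] EuclideanSpace ℝ (Fin n) :=
    Matrix.toEuclideanLin G with hT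
  have hTapp : ∀ (x : EuclideanSpace ℝ (Fin n)) (k : Fin n),
      T x k = ∑ j, ⟪w k, w j⟫ * x j := by
    intro x k
    rfl
  have hinner : ∀ x y : EuclideanSpace ℝ (Fin n), ⟪x, y⟫ = ∑ i, x i * y i := by
    intro x y
    simp [PiLp.inner_apply, RCLike.inner_apply, mul_comm]
  have hxTy : ∀ x y : EuclideanSpace ℝ (Fin n),
      ⟪x, T y⟫ = ∑ j, ∑ k, x j * y k * ⟪w j, w k⟫ := by
    intro x y
    rw [hinner]
    refine Finset.sum_congr rfl fun j _ => ?_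
    rw [hTapp]
    rw [Finset.mul_sum]
    refine Finset.sum_congr rfl fun k _ => ?_
    ring
  have hsym : ∀ x y : EuclideanSpace ℝ (Fin n), ⟪T x, y⟫ = ⟪x, T y⟫ := by
    intro x y
    rw [real_inner_comm, hxTy, hxTy]
    rw [Finset.sum_comm]
    refine Finset.sum_congr rfl fun j _ => Finset.sum_congr rfl fun k _ => ?_
    rw [real_inner_comm (w j)]
    ring
  have hpos : ∀ x : EuclideanSpace ℝ (Fin n), 0 ≤ ⟪x, T x⟫ := by
    intro x
    rw [hxTy]
    have := hpsd x 0
    simpa using this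
  have ht0 : 0 ≤ t := by simpa using hpsd 0 1
  set gE : EuclideanSpace ℝ (Fin n) := (WithLp.equiv 2 _).symm g with hgE
  have hgEapp : ∀ j, gE j = g j := fun j => rfl
  have hker : ∀ x, T x = 0 → ⟪gE, x⟫ = 0 := by
    intro x hx
    rw [hinner]
    have hxTx : ⟪x, T x⟫ = 0 := by rw [hx, inner_zero_right]
    rw [hxTy] at hxTx
    have hL : (∑ j, x j * g j) = 0 := by
      refine ms_quad ht0 fun s => ?_
      have := hpsd x s
      rw [hxTx] at this
      linarith
    rw [← hL]
    refine Finset.sum_congr rfl fun j _ => ?_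
    rw [hgEapp]
    ring
  obtain ⟨a, ha⟩ := ms_solve T hsym hpos gE hker
  set w' : MSH := ∑ j, a j • w j with hw'
  have hw'app : ∀ i : ℕ, w' i = ∑ j, a j * w j i := by
    intro i
    rw [hw', lp.coeFn_sum]
    simp [Finset.sum_apply, lp.coeFn_smul]
  have hinner_w' : ∀ k : Fin n, ⟪w k, w'⟫ = g k := by
    intro k
    rw [hw', inner_sum]
    have hTag : T a k = gE k := by rw [ha]
    rw [← hgEapp k, ← hTag, hTapp]
    refine Finset.sum_congr rfl fun j _ => ?_
    rw [real_inner_smul_right]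
    ring
  have hnorm_w' : ⟪w', w'⟫ = ∑ j, a j * g j := by
    rw [hw', sum_inner]
    refine Finset.sum_congr rfl fun j _ => ?_
    rw [real_inner_smul_left, ← hw', hinner_w' j]
  have htt : ⟪w', w'⟫ ≤ t := by
    have := hpsd a (-1)
    have hGram : (∑ j, ∑ k, a j * a k * ⟪w j, w k⟫) = ⟪w', w'⟫ := by
      rw [hw', sum_inner]
      refine Finset.sum_congr rfl fun j _ => ?_
      rw [real_inner_smul_left, inner_sum, Finset.mul_sum]
      refine Finset.sum_congr rfl fun k _ => ?_
      rw [real_inner_smul_right]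
      ring
    rw [hGram, hnorm_w'] at this
    nlinarith [hnorm_w']
  set c : ℝ := Real.sqrt (t - ⟪w', w'⟫) with hc
  have hc2 : c ^ 2 = t - ⟪w', w'⟫ := Real.sq_sqrt (by linarith)
  set v : MSH := w' + c • lp.single (E := fun _ : ℕ => ℝ) 2 n 1 with hv
  have hw'n : ∀ i : ℕ, n ≤ i → w' i = 0 := by
    intro i hi
    rw [hw'app]
    refine Finset.sum_eq_zero fun j _ => ?_
    rw [hw j i (lt_of_lt_of_le j.isLt hi), mul_zero]
  have hsingle_inner : ∀ f : MSH, ⟪f, lp.single (E := fun _ : ℕ => ℝ) 2 n 1⟫ = f n := by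
    intro f
    rw [lp.inner_single_right]
    simp [RCLike.inner_apply]
  refine ⟨v, ?_, ?_, ?_⟩
  · intro j
    rw [hv, inner_add_right, real_inner_smul_right, hsingle_inner,
      hw j n j.isLt, hinner_w' j]
    ring
  · rw [hv, inner_add_right, inner_add_left, inner_add_left]
    rw [real_inner_smul_right, real_inner_smul_left, real_inner_smul_left,
      real_inner_smul_right]
    rw [hsingle_inner, hw'n n le_rfl]
    have h1 : ⟪lp.single (E := fun _ : ℕ => ℝ) 2 n 1, w'⟫ = 0 := by
      rw [real_inner_comm, hsingle_inner, hw'n n le_rfl]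
    have h2 : ⟪lp.single (E := fun _ : ℕ => ℝ) 2 n 1, lp.single (E := fun _ : ℕ => ℝ) 2 n 1⟫ = 1 := by
      rw [hsingle_inner, lp.single_apply_self]
    rw [h1, h2]
    nlinarith [hc2]
  · intro i hi
    rw [hv, lp.coeFn_add, Pi.add_apply, lp.coeFn_smul, Pi.smul_apply,
      hw'n i (le_of_lt hi), lp.single_apply]
    simp only [Pi.single_apply, if_neg (show i ≠ n by omega)]
    simp

def MSGood (K : ℕ → ℕ → ℝ) (n : ℕ) (w : Fin n → MSH) : Prop :=
  (∀ j k, ⟪w j, w k⟫ = K (j : ℕ) (k : ℕ)) ∧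
    ∀ (j : Fin n) (i : ℕ), (j : ℕ) < i → w j i = 0

lemma ms_step (K : ℕ → ℕ → ℝ) (hKs : ∀ m n, K m n = K n m)
    (hK : ∀ (N : ℕ) (c : Fin N → ℝ), 0 ≤ ∑ j, ∑ k, c j * c k * K (j : ℕ) (k : ℕ))
    (n : ℕ) (w : Fin n → MSH) (hw : MSGood K n w) :
    ∃ v : MSH, MSGood K (n + 1) (Fin.snoc w v) := by
  have hpsd : ∀ (c : Fin n → ℝ) (s : ℝ),
      0 ≤ (∑ j, ∑ k, c j * c k * ⟪w j, w k⟫)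
        + 2 * s * (∑ j : Fin n, c j * K (j : ℕ) n) + s ^ 2 * K n n := by
    intro c s
    have h := hK (n + 1) (Fin.snoc c s)
    simp only [Fin.sum_univ_castSucc, Fin.snoc_castSucc, Fin.snoc_last,
      Fin.coe_castSucc, Fin.val_last] at h
    rw [Finset.sum_add_distrib] at h
    have e1 : (∑ j : Fin n, c j * s * K (j : ℕ) n)
        = s * ∑ j : Fin n, c j * K (j : ℕ) n := by
      rw [Finset.mul_sum]; exact Finset.sum_congr rfl fun j _ => by ring
    have e2 : (∑ k : Fin n, s * c k * K n (k : ℕ))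
        = s * ∑ j : Fin n, c j * K (j : ℕ) n := by
      rw [Finset.mul_sum]
      exact Finset.sum_congr rfl fun j _ => by rw [hKs n (j : ℕ)]; ring
    have e3 : (∑ j : Fin n, ∑ k : Fin n, c j * c k * ⟪w j, w k⟫)
        = ∑ j : Fin n, ∑ k : Fin n, c j * c k * K (j : ℕ) (k : ℕ) := by
      exact Finset.sum_congr rfl fun j _ => Finset.sum_congr rfl fun k _ => by
        rw [hw.1]
    rw [e3]
    nlinarith [h, e1, e2]
  obtain ⟨v, hv1, hv2, hv3⟩ :=
    ms_exists_next n w (fun j => K (j : ℕ) n) (K n n) hw.2 hpsd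
  refine ⟨v, ?_, ?_⟩
  · intro j k
    refine Fin.lastCases ?_ (fun j' => ?_) j <;> [skip; refine Fin.lastCases ?_ (fun k' => ?_) k]
    · refine Fin.lastCases ?_ (fun k' => ?_) k
      · simp only [Fin.snoc_last, Fin.val_last]
        exact hv2
      · simp only [Fin.snoc_last, Fin.snoc_castSucc, Fin.val_last, Fin.coe_castSucc]
        rw [real_inner_comm, hv1 k', hKs]
    · simp only [Fin.snoc_last, Fin.snoc_castSucc, Fin.val_last, Fin.coe_castSucc]
      exact hv1 j'
    · simp only [Fin.snoc_castSucc, Fin.coe_castSucc]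
      exact hw.1 j' k'
  · intro j i
    refine Fin.lastCases ?_ (fun j' => ?_) j <;> intro hij <;>
      simp only [Fin.snoc_last, Fin.snoc_castSucc]
    · exact hv3 i (by simpa using hij)
    · exact hw.2 j' i (by simpa using hij)

lemma ms_gram (K : ℕ → ℕ → ℝ) (hKs : ∀ m n, K m n = K n m)
    (hK : ∀ (N : ℕ) (c : Fin N → ℝ), 0 ≤ ∑ j, ∑ k, c j * c k * K (j : ℕ) (k : ℕ)) :
    ∃ v : ℕ → MSH, ∀ m n : ℕ, ⟪v m, v n⟫ = K m n := by
  have good0 : MSGood K 0 (fun j => j.elim0) :=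
    ⟨fun j => j.elim0, fun j => j.elim0⟩
  let F : ∀ n : ℕ, {w : Fin n → MSH // MSGood K n w} :=
    fun n => Nat.rec ⟨fun j => j.elim0, good0⟩
      (fun n p => ⟨Fin.snoc p.1 (ms_step K hKs hK n p.1 p.2).choose,
        (ms_step K hKs hK n p.1 p.2).choose_spec⟩) n
  have hcomp : ∀ (n : ℕ) (j : Fin n), (F (n + 1)).1 j.castSucc = (F n).1 j := by
    intro n j
    have hFs : (F (n + 1)).1
        = Fin.snoc (F n).1 (ms_step K hKs hK n (F n).1 (F n).2).choose := rfl
    rw [hFs, Fin.snoc_castSucc]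
  set v : ℕ → MSH := fun m => (F (m + 1)).1 (Fin.last m) with hv
  have claim : ∀ (n : ℕ) (j : Fin n), (F n).1 j = v (j : ℕ) := by
    intro n
    induction n with
    | zero => exact fun j => j.elim0
    | succ n ih =>
      intro j
      refine Fin.lastCases ?_ (fun j' => ?_) j
      · rfl
      · rw [hcomp n j', ih j']
        rfl
  refine ⟨v, fun m n => ?_⟩
  have hm : m < max m n + 1 := by omega
  have hn : n < max m n + 1 := by omega
  have := (F (max m n + 1)).2.1 ⟨m, hm⟩ ⟨n, hn⟩
  rwa [claim _ ⟨m, hm⟩, claim _ ⟨n, hn⟩] at this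

lemma ms_fin_sum_extend {N M : ℕ} (h : N ≤ M) (f : Fin M → ℝ)
    (hf : ∀ j : Fin M, N ≤ (j : ℕ) → f j = 0) :
    ∑ j : Fin M, f j = ∑ j : Fin N, f (Fin.castLE h j) := by
  have hmap : ∑ j ∈ Finset.univ.map (Fin.castLEEmb h), f j
      = ∑ j : Fin N, f (Fin.castLE h j) := by
    rw [Finset.sum_map]
    rfl
  rw [← hmap]
  refine (Finset.sum_subset (Finset.subset_univ _) fun x _ hx => hf x ?_).symm
  by_contra hlt
  push_neg at hlt
  exact hx (Finset.mem_map.2 ⟨⟨(x : ℕ), hlt⟩, Finset.mem_univ _, by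
    simp [Fin.castLEEmb, Fin.castLE]⟩)

lemma ms_key {X : Type*} [MetricSpace X]
    (hPSD : ∀ n : ℕ, 2 ≤ n → ∀ x : Fin (n + 1) → X,
      (Matrix.of fun j k : Fin n =>
        dist (x 0) (x j.succ) ^ 2 + dist (x 0) (x k.succ) ^ 2
          - dist (x j.succ) (x k.succ) ^ 2).PosSemidef)
    (b : X) (N : ℕ) (y : Fin N → X) (c : Fin N → ℝ) :
    0 ≤ ∑ j, ∑ k, c j * c k *
      ((dist b (y j) ^ 2 + dist b (y k) ^ 2 - dist (y j) (y k) ^ 2) / 2) := by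
  classical
  set g : Fin (N + 2) → X := fun i => if h : (i : ℕ) < N then y ⟨i, h⟩ else b with hg
  set x : Fin (N + 3) → X := Fin.cases b g with hx
  set c' : Fin (N + 2) → ℝ := fun i => if h : (i : ℕ) < N then c ⟨i, h⟩ else 0 with hc'
  have hx0 : x 0 = b := rfl
  have hxsucc : ∀ i : Fin (N + 2), x i.succ = g i := fun i => by
    simp [hx]
  have hpsd := (hPSD (N + 2) (by omega) x).dotProduct_mulVec_nonneg c'
  set M : Matrix (Fin (N + 2)) (Fin (N + 2)) ℝ := Matrix.of fun j k =>
    dist (x 0) (x j.succ) ^ 2 + dist (x 0) (x k.succ) ^ 2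
      - dist (x j.succ) (x k.succ) ^ 2 with hMdef
  have hexp : star c' ⬝ᵥ M *ᵥ c' = ∑ j : Fin (N + 2), c' j * ∑ k : Fin (N + 2), M j k * c' k := by
    simp [dotProduct, Matrix.mulVec]
  rw [hexp] at hpsd
  have hNle : N ≤ N + 2 := by omega
  have hout : (∑ j : Fin (N + 2), c' j * ∑ k : Fin (N + 2), M j k * c' k)
      = ∑ j : Fin N, c' (Fin.castLE hNle j) * ∑ k : Fin (N + 2), M (Fin.castLE hNle j) k * c' k := by
    refine ms_fin_sum_extend hNle _ fun j hj => ?_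
    rw [hc']
    simp only [dif_neg (by omega : ¬ (j : ℕ) < N)]
    ring
  have hin : ∀ j : Fin N, (∑ k : Fin (N + 2), M (Fin.castLE hNle j) k * c' k)
      = ∑ k : Fin N, M (Fin.castLE hNle j) (Fin.castLE hNle k) * c' (Fin.castLE hNle k) := by
    intro j
    refine ms_fin_sum_extend hNle _ fun k hk => ?_
    rw [hc']
    simp only [dif_neg (by omega : ¬ (k : ℕ) < N)]
    ring
  rw [hout] at hpsd
  simp only [hin] at hpsd
  have hc'e : ∀ j : Fin N, c' (Fin.castLE hNle j) = c j := by
    intro j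
    rw [hc']
    simp only [Fin.coe_castLE, dif_pos j.isLt]
  have hge : ∀ j : Fin N, g (Fin.castLE hNle j) = y j := by
    intro j
    rw [hg]
    simp only [Fin.coe_castLE, dif_pos j.isLt]
  have hMe : ∀ j k : Fin N, M (Fin.castLE hNle j) (Fin.castLE hNle k)
      = dist b (y j) ^ 2 + dist b (y k) ^ 2 - dist (y j) (y k) ^ 2 := by
    intro j k
    rw [hMdef]
    simp only [Matrix.of_apply]
    rw [hx0, hxsucc, hxsucc, hge, hge]
  calc (0:ℝ) ≤ (∑ j : Fin N, c' (Fin.castLE hNle j) *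
        ∑ k : Fin N, M (Fin.castLE hNle j) (Fin.castLE hNle k) * c' (Fin.castLE hNle k)) / 2 := by
        linarith
    _ = ∑ j, ∑ k, c j * c k *
        ((dist b (y j) ^ 2 + dist b (y k) ^ 2 - dist (y j) (y k) ^ 2) / 2) := by
        rw [Finset.sum_div]
        refine Finset.sum_congr rfl fun j _ => ?_
        rw [hc'e, Finset.mul_sum, Finset.sum_div]
        refine Finset.sum_congr rfl fun k _ => ?_
        rw [hc'e, hMe]
        ring

end MengerSchoenbergAux

/-- Menger–Schoenberg: a separable metric space embeds isometrically into the
real Hilbert space ℓ² iff, for every `n ≥ 2` and every `(n+1)`-tuple of points,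
the matrix `[ρ(x₀,x_j)² + ρ(x₀,x_k)² − ρ(x_j,x_k)²]` is positive semidefinite. -/
theorem stmt1 {X : Type*} [MetricSpace X] [TopologicalSpace.SeparableSpace X] :
    (∃ φ : X → lp (fun _ : ℕ => ℝ) 2, ∀ x y : X, ‖φ x - φ y‖ = dist x y) ↔
    (∀ n : ℕ, 2 ≤ n → ∀ x : Fin (n + 1) → X,
      (Matrix.of fun j k : Fin n =>
        dist (x 0) (x j.succ) ^ 2 + dist (x 0) (x k.succ) ^ 2
          - dist (x j.succ) (x k.succ) ^ 2).PosSemidef) := by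
  constructor
  · intro h
    obtain ⟨φ, hφ⟩ := h
    intro n _ x
    set a : Fin n → MSH := fun j => φ (x j.succ) - φ (x 0) with ha
    have haj : ∀ j : Fin n, a j = φ (x j.succ) - φ (x 0) := fun j => rfl
    have hnorm : ∀ j : Fin n, ‖a j‖ = dist (x 0) (x j.succ) := by
      intro j
      rw [haj, hφ (x j.succ) (x 0), dist_comm]
    have hM : ∀ j k : Fin n,
        dist (x 0) (x j.succ) ^ 2 + dist (x 0) (x k.succ) ^ 2
          - dist (x j.succ) (x k.succ) ^ 2 = 2 * ⟪a j, a k⟫ := by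
      intro j k
      have h3 : ‖a j - a k‖ = dist (x j.succ) (x k.succ) := by
        rw [haj, haj]
        have heq : φ (x j.succ) - φ (x 0) - (φ (x k.succ) - φ (x 0))
            = φ (x j.succ) - φ (x k.succ) := by abel
        rw [heq, hφ]
      have h4 := norm_sub_sq_real (a j) (a k)
      rw [h3, hnorm j, hnorm k] at h4
      linarith
    refine Matrix.PosSemidef.of_dotProduct_mulVec_nonneg ?_ ?_
    · rw [Matrix.IsHermitian]
      ext j k
      simp only [Matrix.conjTranspose_apply, Matrix.of_apply, star_trivial]
      rw [dist_comm (x j.succ) (x k.succ)]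
      ring
    · intro c
      have hgoal : star c ⬝ᵥ (Matrix.of fun j k : Fin n =>
          dist (x 0) (x j.succ) ^ 2 + dist (x 0) (x k.succ) ^ 2
            - dist (x j.succ) (x k.succ) ^ 2) *ᵥ c
          = 2 * ⟪∑ j, c j • a j, ∑ k, c k • a k⟫ := by
        simp only [dotProduct, Matrix.mulVec, Matrix.of_apply, Pi.star_apply,
          star_trivial]
        rw [sum_inner, Finset.mul_sum]
        refine Finset.sum_congr rfl fun j _ => ?_
        rw [real_inner_smul_left, inner_sum, Finset.mul_sum, Finset.mul_sum, Finset.mul_sum]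
        refine Finset.sum_congr rfl fun k _ => ?_
        rw [hM j k, real_inner_smul_right]
        ring
      rw [hgoal]
      have := real_inner_self_nonneg (x := ∑ j, c j • a j)
      linarith
  · intro hPSD
    by_cases hne : Nonempty X
    case neg =>
      haveI : IsEmpty X := not_nonempty_iff.1 hne
      exact ⟨fun x => isEmptyElim x, fun x => isEmptyElim x⟩
    haveI := hne
    set u : ℕ → X := TopologicalSpace.denseSeq X with hu
    have hdr : DenseRange u := TopologicalSpace.denseRange_denseSeq X
    set b : X := u 0 with hb
    set K : ℕ → ℕ → ℝ := fun m n =>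
      (dist b (u m) ^ 2 + dist b (u n) ^ 2 - dist (u m) (u n) ^ 2) / 2 with hK
    have hKs : ∀ m n, K m n = K n m := by
      intro m n
      rw [hK]
      simp only
      rw [dist_comm (u m) (u n)]
      ring
    have hKpos : ∀ (N : ℕ) (c : Fin N → ℝ),
        0 ≤ ∑ j, ∑ k, c j * c k * K (j : ℕ) (k : ℕ) :=
      fun N c => ms_key hPSD b N (fun j => u (j : ℕ)) c
    obtain ⟨v, hv⟩ := ms_gram K hKs hKpos
    -- isometry on the dense sequence
    have hdist : ∀ m n : ℕ, ‖v m - v n‖ = dist (u m) (u n) := by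
      intro m n
      have hsq : ‖v m - v n‖ ^ 2 = dist (u m) (u n) ^ 2 := by
        rw [norm_sub_sq_real, ← real_inner_self_eq_norm_sq (v m),
          ← real_inner_self_eq_norm_sq (v n), hv, hv, hv, hK]
        simp only [dist_self]
        ring
      calc ‖v m - v n‖ = Real.sqrt (‖v m - v n‖ ^ 2) :=
            (Real.sqrt_sq (norm_nonneg _)).symm
        _ = Real.sqrt (dist (u m) (u n) ^ 2) := by rw [hsq]
        _ = dist (u m) (u n) := Real.sqrt_sq dist_nonneg
    have hdist' : ∀ m n : ℕ, dist (v m) (v n) = dist (u m) (u n) := by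
      intro m n
      rw [dist_eq_norm, hdist]
    -- approximating indices
    have hD : ∀ (x : X) (k : ℕ), ∃ n : ℕ, dist x (u n) < 1 / (k + 1) := by
      intro x k
      exact Metric.denseRange_iff.1 hdr x _ (by positivity)
    set f : X → ℕ → ℕ := fun x k => (hD x k).choose with hf
    have hfd : ∀ (x : X) (k : ℕ), dist x (u (f x k)) < 1 / (k + 1) :=
      fun x k => (hD x k).choose_spec
    have hconv : ∀ x : X, Filter.Tendsto (fun k => u (f x k)) Filter.atTop (nhds x) := by
      intro x
      rw [tendsto_iff_dist_tendsto_zero]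
      refine squeeze_zero (g := fun k : ℕ => 1 / ((k : ℝ) + 1)) (fun k => dist_nonneg)
        (fun k => le_of_lt (by rw [dist_comm]; exact hfd x k))
        tendsto_one_div_add_atTop_nhds_zero_nat
    have hcauchy : ∀ x : X, CauchySeq (fun k => v (f x k)) := by
      intro x
      rw [Metric.cauchySeq_iff]
      intro ε hε
      obtain ⟨Nn, hNn⟩ := exists_nat_gt (2 / ε)
      refine ⟨Nn, fun m hm n hn => ?_⟩
      have h1 : dist (v (f x m)) (v (f x n)) = dist (u (f x m)) (u (f x n)) := hdist' _ _
      have h2 : dist (u (f x m)) (u (f x n)) ≤ dist (u (f x m)) x + dist x (u (f x n)) :=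
        dist_triangle _ _ _
      have h3 : dist (u (f x m)) x < 1 / (m + 1) := by rw [dist_comm]; exact hfd x m
      have h4 : dist x (u (f x n)) < 1 / (n + 1) := hfd x n
      have h5 : (1 : ℝ) / (m + 1) ≤ 1 / (Nn + 1) := by
        apply one_div_le_one_div_of_le (by positivity)
        exact_mod_cast by omega
      have h6 : (1 : ℝ) / (n + 1) ≤ 1 / (Nn + 1) := by
        apply one_div_le_one_div_of_le (by positivity)
        exact_mod_cast by omega
      have h7 : (2 : ℝ) / (Nn + 1) < ε := by
        rw [div_lt_iff₀ (by positivity)]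
        rw [div_lt_iff₀ hε] at hNn
        nlinarith
      rw [h1]
      calc dist (u (f x m)) (u (f x n)) ≤ dist (u (f x m)) x + dist x (u (f x n)) := h2
        _ < 1 / (Nn + 1) + 1 / (Nn + 1) := by linarith
        _ = 2 / (Nn + 1) := by ring
        _ < ε := h7
    have hL : ∀ x : X, ∃ L : MSH, Filter.Tendsto (fun k => v (f x k)) Filter.atTop (nhds L) :=
      fun x => cauchySeq_tendsto_of_complete (hcauchy x)
    refine ⟨fun x => (hL x).choose, fun x y => ?_⟩
    have h1 : Filter.Tendsto (fun k => dist (v (f x k)) (v (f y k))) Filter.atTop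
        (nhds (dist ((hL x).choose) ((hL y).choose))) :=
      Filter.Tendsto.dist (hL x).choose_spec (hL y).choose_spec
    have h2 : (fun k => dist (v (f x k)) (v (f y k)))
        = fun k => dist (u (f x k)) (u (f y k)) := funext fun k => hdist' _ _
    have h3 : Filter.Tendsto (fun k => dist (u (f x k)) (u (f y k))) Filter.atTop
        (nhds (dist x y)) := Filter.Tendsto.dist (hconv x) (hconv y)
    rw [h2] at h1
    rw [← dist_eq_norm]
    exact tendsto_nhds_unique h1 h3
end

section
/- Let n ≥ 1 be an integer and 0 < ρ ≤ ∞, and let f(x) = Σ_{k ≥ 0} c_k x^k be a power series converging on [0, ρ) such that f[A] is positive semidefinite for every rank-one positive semidefinite n × n real matrix A with entries in [0, ρ). Suppose c_{m'} < 0 for some index m'. Then: (1) if ρ < ∞, there are at least n indices m < m' with c_m > 0; (2) if ρ = ∞, there are at least n indices m < m' with c_m > 0 and at least n indices m > m' with c_m > 0. -/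
open scoped ENNReal

private lemma abs_summable_of_lt {c : ℕ → ℝ} {x r : ℝ} (hx : 0 < x) (hr : 0 ≤ r)
    (hrx : r < x) (h : Summable (fun k => c k * x ^ k)) :
    Summable (fun k => |c k| * r ^ k) := by
  have h0 : Filter.Tendsto (fun k => |c k * x ^ k|) Filter.atTop (nhds 0) := by
    simpa using (h.tendsto_atTop_zero.abs)
  obtain ⟨B, hB⟩ := h0.bddAbove_range
  have hBle : ∀ k, |c k * x ^ k| ≤ B := fun k => hB (Set.mem_range_self k)
  have hgeo : Summable (fun k : ℕ => B * (r / x) ^ k) :=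
    (summable_geometric_of_lt_one (div_nonneg hr hx.le)
      ((div_lt_one hx).mpr hrx)).mul_left B
  refine Summable.of_nonneg_of_le (fun k => by positivity) (fun k => ?_) hgeo
  have hrk : r ^ k = x ^ k * (r / x) ^ k := by
    rw [← mul_pow, mul_div_cancel₀ _ hx.ne']
  calc |c k| * r ^ k = |c k * x ^ k| * (r / x) ^ k := by
        rw [abs_mul, abs_pow, abs_of_pos hx, hrk]; ring
    _ ≤ B * (r / x) ^ k := by
        have : (0:ℝ) ≤ (r/x)^k := by positivity
        exact mul_le_mul_of_nonneg_right (hBle k) this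

private lemma exists_dual_vec (n : ℕ) (T : Finset ℕ) (hT : T.card = n) (m' : ℕ)
    (hm' : m' ∈ T) :
    ∃ v : Fin n → ℝ, ∀ m ∈ T,
      (∑ j : Fin n, v j * ((2:ℝ) ^ (j : ℕ)) ^ m) = if m = m' then 1 else 0 := by
  classical
  let t := T.orderIsoOfFin hT
  set w : Fin n → ℝ := fun i => (2:ℝ) ^ ((t i : ℕ)) with hw_def
  have hw : Function.Injective w := by
    intro a b hab
    have h2 : ((t a : ℕ)) = ((t b : ℕ)) :=
      pow_right_injective₀ (by norm_num : (0:ℝ) < 2) (by norm_num) hab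
    exact t.injective (Subtype.ext h2)
  have hdet : (Matrix.vandermonde w).det ≠ 0 := Matrix.det_vandermonde_ne_zero_iff.mpr hw
  set V := Matrix.vandermonde w with hV_def
  have hVu : IsUnit V.det := isUnit_iff_ne_zero.mpr hdet
  set i' : Fin n := t.symm ⟨m', hm'⟩ with hi'_def
  set e : Fin n → ℝ := Pi.single i' (1:ℝ) with he_def
  refine ⟨(V⁻¹).mulVec e, ?_⟩
  intro m hm
  set i : Fin n := t.symm ⟨m, hm⟩ with hi_def
  have hti : ((t i : ℕ)) = m := by rw [hi_def, OrderIso.apply_symm_apply]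
  have hmv : V.mulVec ((V⁻¹).mulVec (e)) = e := by
    rw [Matrix.mulVec_mulVec, Matrix.mul_nonsing_inv _ hVu, Matrix.one_mulVec]
  have h1 : ∑ j, V i j * ((V⁻¹).mulVec (e)) j = e i := by
    simpa [Matrix.mulVec, dotProduct] using congrFun hmv i
  have h2 : ∀ j : Fin n, V i j = ((2:ℝ) ^ (j:ℕ)) ^ m := by
    intro j
    rw [hV_def, Matrix.vandermonde_apply, hw_def, ← hti, pow_right_comm]
  calc ∑ j : Fin n, (V⁻¹).mulVec (e) j * ((2:ℝ) ^ (j:ℕ)) ^ m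
      = ∑ j : Fin n, V i j * ((V⁻¹).mulVec (e)) j := by
        refine Finset.sum_congr rfl fun j _ => ?_
        rw [h2 j, mul_comm]
    _ = e i := h1
    _ = if m = m' then 1 else 0 := by
        rw [he_def, Pi.single_apply]
        by_cases h : m = m'
        · subst h
          simp [hi_def, hi'_def]
        · rw [if_neg h, if_neg]
          intro hii
          apply h
          have := congrArg (fun z : Fin n => ((t z : ℕ))) hii
          simpa [hi_def, hi'_def] using this

private lemma quad_identity {n : ℕ} (c : ℕ → ℝ) (u v : Fin n → ℝ)
    (hs : ∀ j k, Summable (fun m => c m * (u j * u k) ^ m)) :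
    ∑ j, v j * ∑ k, (∑' m : ℕ, c m * (u j * u k) ^ m) * v k
      = ∑' m : ℕ, c m * (∑ j, v j * u j ^ m) ^ 2 := by
  have hs2 : ∀ j k, Summable (fun m => v j * (c m * (u j * u k) ^ m * v k)) :=
    fun j k => ((hs j k).mul_right (v k)).mul_left (v j)
  have hs3 : ∀ j : Fin n, Summable (fun m => ∑ k, v j * (c m * (u j * u k) ^ m * v k)) :=
    fun j => summable_sum (fun k _ => hs2 j k)
  calc ∑ j, v j * ∑ k, (∑' m : ℕ, c m * (u j * u k) ^ m) * v k
      = ∑ j, ∑ k, ∑' m : ℕ, v j * (c m * (u j * u k) ^ m * v k) := by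
        refine Finset.sum_congr rfl fun j _ => ?_
        rw [Finset.mul_sum]
        refine Finset.sum_congr rfl fun k _ => ?_
        rw [← tsum_mul_right, ← tsum_mul_left]
    _ = ∑ j, ∑' m : ℕ, ∑ k, v j * (c m * (u j * u k) ^ m * v k) := by
        refine Finset.sum_congr rfl fun j _ => ?_
        exact (Summable.tsum_finsetSum (fun k _ => hs2 j k)).symm
    _ = ∑' m : ℕ, ∑ j, ∑ k, v j * (c m * (u j * u k) ^ m * v k) :=
        (Summable.tsum_finsetSum (fun j _ => hs3 j)).symm
    _ = ∑' m : ℕ, c m * (∑ j, v j * u j ^ m) ^ 2 := by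
        refine tsum_congr fun m => ?_
        rw [sq, Finset.sum_mul_sum, Finset.mul_sum]
        refine Finset.sum_congr rfl fun j _ => ?_
        rw [Finset.mul_sum]
        refine Finset.sum_congr rfl fun k _ => ?_
        rw [mul_pow]
        ring

private lemma core (n : ℕ) (ρ : ℝ≥0∞) (c : ℕ → ℝ)
    (hconv : ∀ x : ℝ, 0 ≤ x → ENNReal.ofReal x < ρ →
      Summable (fun k => c k * x ^ k))
    (hpres : ∀ u : Fin n → ℝ,
      (∀ j k, 0 ≤ u j * u k ∧ ENNReal.ofReal (u j * u k) < ρ) →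
      (Matrix.of fun j k : Fin n =>
        ∑' m : ℕ, c m * (u j * u k) ^ m).PosSemidef)
    (T : Finset ℕ) (hT : T.card = n) (m' : ℕ) (hm'T : m' ∈ T) :
    ∃ g : ℕ → ℝ, ∃ C : ℝ, 0 ≤ C ∧
      (∀ m ∈ T, g m = if m = m' then 1 else 0) ∧
      (∀ m, (g m) ^ 2 ≤ C * (((2:ℝ) ^ n) ^ 2) ^ m) ∧
      ∀ ε : ℝ, 0 < ε → (∀ j k : Fin n,
          ENNReal.ofReal ((ε * 2 ^ (j : ℕ)) * (ε * 2 ^ (k : ℕ))) < ρ) →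
        0 ≤ ∑' m : ℕ, c m * (ε ^ m * g m) ^ 2 := by
  classical
  obtain ⟨v, hv⟩ := exists_dual_vec n T hT m' hm'T
  set g : ℕ → ℝ := fun m => ∑ j : Fin n, v j * ((2:ℝ) ^ (j : ℕ)) ^ m with hg_def
  set C : ℝ := (∑ j : Fin n, |v j|) ^ 2 with hC_def
  have hC0 : 0 ≤ C := sq_nonneg _
  have hgb : ∀ m, (g m) ^ 2 ≤ C * (((2:ℝ) ^ n) ^ 2) ^ m := by
    intro m
    have habs : |g m| ≤ (∑ j : Fin n, |v j|) * ((2:ℝ) ^ n) ^ m := by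
      calc |g m| ≤ ∑ j : Fin n, |v j * ((2:ℝ) ^ (j : ℕ)) ^ m| :=
            Finset.abs_sum_le_sum_abs _ _
        _ ≤ ∑ j : Fin n, |v j| * ((2:ℝ) ^ n) ^ m := by
            refine Finset.sum_le_sum fun j _ => ?_
            rw [abs_mul, abs_pow, abs_pow, abs_of_pos (by norm_num : (0:ℝ) < 2)]
            refine mul_le_mul_of_nonneg_left ?_ (abs_nonneg _)
            exact pow_le_pow_left₀ (by positivity)
              (pow_le_pow_right₀ one_le_two j.isLt.le) m
        _ = (∑ j : Fin n, |v j|) * ((2:ℝ) ^ n) ^ m := by rw [Finset.sum_mul]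
    have := sq_abs (g m) ▸ pow_le_pow_left₀ (abs_nonneg _) habs 2
    calc (g m) ^ 2 = |g m| ^ 2 := (sq_abs _).symm
      _ ≤ ((∑ j : Fin n, |v j|) * ((2:ℝ) ^ n) ^ m) ^ 2 :=
          pow_le_pow_left₀ (abs_nonneg _) habs 2
      _ = C * (((2:ℝ) ^ n) ^ 2) ^ m := by
          rw [hC_def, mul_pow]
          congr 1
          exact pow_right_comm _ _ _
  refine ⟨g, C, hC0, hv, hgb, ?_⟩
  intro ε hε hcon
  set u : Fin n → ℝ := fun j => ε * 2 ^ (j : ℕ) with hu_def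
  have hu : ∀ j k, 0 ≤ u j * u k ∧ ENNReal.ofReal (u j * u k) < ρ := by
    intro j k
    exact ⟨by positivity, hcon j k⟩
  have hs : ∀ j k, Summable (fun m => c m * (u j * u k) ^ m) :=
    fun j k => hconv _ (hu j k).1 (hu j k).2
  have hpsd := (hpres u hu).dotProduct_mulVec_nonneg v
  have hQ : dotProduct (star v) ((Matrix.of fun j k : Fin n =>
        ∑' m : ℕ, c m * (u j * u k) ^ m).mulVec v)
      = ∑ j, v j * ∑ k, (∑' m : ℕ, c m * (u j * u k) ^ m) * v k := by
    simp [dotProduct, Matrix.mulVec, Matrix.of_apply, star_trivial]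
  rw [hQ, quad_identity c u v hs] at hpsd
  have heq : ∀ m : ℕ, ∑ j, v j * u j ^ m = ε ^ m * g m := by
    intro m
    rw [hg_def, Finset.mul_sum]
    refine Finset.sum_congr rfl fun j _ => ?_
    rw [hu_def, mul_pow]
    ring
  calc (0:ℝ) ≤ ∑' m : ℕ, c m * (∑ j, v j * u j ^ m) ^ 2 := hpsd
    _ = ∑' m : ℕ, c m * (ε ^ m * g m) ^ 2 := tsum_congr fun m => by rw [heq m]

set_option maxHeartbeats 1000000 in
private lemma earlier (n : ℕ) (ρ : ℝ≥0∞) (hρ : 0 < ρ) (c : ℕ → ℝ)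
    (hconv : ∀ x : ℝ, 0 ≤ x → ENNReal.ofReal x < ρ →
      Summable (fun k => c k * x ^ k))
    (hpres : ∀ u : Fin n → ℝ,
      (∀ j k, 0 ≤ u j * u k ∧ ENNReal.ofReal (u j * u k) < ρ) →
      (Matrix.of fun j k : Fin n =>
        ∑' m : ℕ, c m * (u j * u k) ^ m).PosSemidef)
    (m' : ℕ) (hm' : c m' < 0) :
    ∃ S : Finset ℕ, S.card = n ∧ ∀ m ∈ S, m < m' ∧ 0 < c m := by
  classical
  by_contra hcontra
  set S₀ : Finset ℕ := (Finset.range m').filter (fun m => 0 < c m) with hS₀_def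
  have hS₀card : S₀.card < n := by
    by_contra hge
    push_neg at hge
    obtain ⟨S, hSsub, hScard⟩ := Finset.exists_subset_card_eq hge
    refine hcontra ⟨S, hScard, fun m hm => ?_⟩
    have := hSsub hm
    rw [hS₀_def, Finset.mem_filter, Finset.mem_range] at this
    exact this
  obtain ⟨T, hTsub, hTcard⟩ := Infinite.exists_superset_card_eq (insert m' S₀) n
    (le_trans (Finset.card_insert_le _ _) hS₀card)
  have hm'T : m' ∈ T := hTsub (Finset.mem_insert_self _ _)
  obtain ⟨g, C, hC0, hg, hgb, hpos⟩ := core n ρ c hconv hpres T hTcard m' hm'T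
  obtain ⟨x₀, hx₀, hx₀ρ⟩ : ∃ x : ℝ, 0 < x ∧ ENNReal.ofReal x < ρ := by
    rcases eq_or_ne ρ ⊤ with h | h
    · exact ⟨1, one_pos, h ▸ ENNReal.ofReal_lt_top⟩
    · have ht : 0 < ρ.toReal := ENNReal.toReal_pos hρ.ne' h
      refine ⟨ρ.toReal / 2, by linarith, ?_⟩
      rw [ENNReal.ofReal_lt_iff_lt_toReal (by linarith) h]
      linarith
  have hsum_x₀ := hconv x₀ hx₀.le hx₀ρ
  set r₀ : ℝ := x₀ / 2 with hr₀_def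
  have hr₀ : 0 < r₀ := by rw [hr₀_def]; linarith
  have hr₀x : r₀ < x₀ := by rw [hr₀_def]; linarith
  set W : ℝ := ((2:ℝ) ^ n) ^ 2 with hW_def
  have hW1 : (1:ℝ) ≤ W := by
    rw [hW_def]
    exact one_le_pow₀ (one_le_pow₀ one_le_two)
  have hW0 : (0:ℝ) < W := lt_of_lt_of_le one_pos hW1
  set N : ℕ := m' + 1 with hN_def
  have hshift : Summable (fun i => |c (i + N)| * r₀ ^ (i + N)) :=
    (summable_nat_add_iff N).mpr (abs_summable_of_lt hx₀ hr₀.le hr₀x hsum_x₀)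
  have hKsum : Summable (fun i => |c (i + N)| * r₀ ^ i) := by
    refine (hshift.mul_left ((r₀ ^ N)⁻¹)).congr fun i => ?_
    have h0 : (r₀:ℝ) ≠ 0 := hr₀.ne'
    rw [pow_add]
    field_simp
    ring
  set K : ℝ := ∑' i, |c (i + N)| * r₀ ^ i with hK_def
  have hK0 : 0 ≤ K :=
    tsum_nonneg fun i => mul_nonneg (abs_nonneg _) (pow_nonneg hr₀.le i)
  set D : ℝ := C * K * W ^ N with hD_def
  have hD0 : 0 ≤ D := mul_nonneg (mul_nonneg hC0 hK0) (pow_nonneg hW0.le N)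
  have hcm : 0 < -c m' := by linarith
  have h2d : (0:ℝ) < 2 * (D + 1) := by linarith
  set δ : ℝ := min (r₀ / W) ((-c m') / (2 * (D + 1))) with hδ_def
  have hδ0 : 0 < δ := lt_min (div_pos hr₀ hW0) (div_pos hcm h2d)
  have hδW : δ * W ≤ r₀ := by
    have h1 : δ ≤ r₀ / W := min_le_left _ _
    calc δ * W ≤ (r₀ / W) * W := mul_le_mul_of_nonneg_right h1 hW0.le
      _ = r₀ := by field_simp
  have hδWx : δ * W < x₀ := lt_of_le_of_lt hδW hr₀x
  have hδW0 : 0 ≤ δ * W := mul_nonneg hδ0.le hW0.le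
  set ε : ℝ := Real.sqrt δ with hε_def
  have hε0 : 0 < ε := Real.sqrt_pos.mpr hδ0
  have hε2 : ε ^ 2 = δ := Real.sq_sqrt hδ0.le
  have hεp : ∀ m : ℕ, (ε ^ m) ^ 2 = δ ^ m := by
    intro m
    rw [← pow_mul, Nat.mul_comm, pow_mul, hε2]
  have hcon : ∀ j k : Fin n,
      ENNReal.ofReal ((ε * 2 ^ (j:ℕ)) * (ε * 2 ^ (k:ℕ))) < ρ := by
    intro j k
    have h1 : (2:ℝ) ^ (j:ℕ) ≤ 2 ^ n := pow_le_pow_right₀ one_le_two j.isLt.le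
    have h2 : (2:ℝ) ^ (k:ℕ) ≤ 2 ^ n := pow_le_pow_right₀ one_le_two k.isLt.le
    have hle : (ε * 2 ^ (j:ℕ)) * (ε * 2 ^ (k:ℕ)) ≤ δ * W := by
      have heq : (ε * 2 ^ (j:ℕ)) * (ε * 2 ^ (k:ℕ))
          = ε ^ 2 * ((2:ℝ) ^ (j:ℕ) * 2 ^ (k:ℕ)) := by ring
      rw [heq, hε2, hW_def, sq]
      exact mul_le_mul_of_nonneg_left
        (mul_le_mul h1 h2 (by positivity) (by positivity)) hδ0.le
    exact lt_of_le_of_lt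
      (ENNReal.ofReal_le_ofReal (le_trans hle hδWx.le)) hx₀ρ
  have hQ := hpos ε hε0 hcon
  set F : ℕ → ℝ := fun m => c m * (ε ^ m * g m) ^ 2 with hF_def
  have hFm : ∀ m, F m = c m * (ε ^ m * g m) ^ 2 := fun m => rfl
  have hFb : ∀ m, |F m| ≤ C * (|c m| * (δ * W) ^ m) := by
    intro m
    have habs : |F m| = |c m| * ((ε ^ m) ^ 2 * (g m) ^ 2) := by
      rw [hFm m, abs_mul, mul_pow,
        abs_of_nonneg (by positivity : (0:ℝ) ≤ (ε ^ m) ^ 2 * (g m) ^ 2)]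
    rw [habs, hεp m]
    calc |c m| * (δ ^ m * (g m) ^ 2)
        ≤ |c m| * (δ ^ m * (C * W ^ m)) := by
          refine mul_le_mul_of_nonneg_left ?_ (abs_nonneg _)
          exact mul_le_mul_of_nonneg_left (hgb m) (pow_nonneg hδ0.le m)
      _ = C * (|c m| * (δ * W) ^ m) := by rw [mul_pow]; ring
  have hFsummable : Summable F := by
    have habs2 : Summable (fun m => C * (|c m| * (δ * W) ^ m)) :=
      (abs_summable_of_lt hx₀ hδW0 hδWx hsum_x₀).mul_left C
    exact (Summable.of_nonneg_of_le (fun m => abs_nonneg _) hFb habs2).of_abs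
  have hsplit : ∑' m, F m = (∑ i ∈ Finset.range N, F i) + ∑' i, F (i + N) :=
    (Summable.sum_add_tsum_nat_add N hFsummable).symm
  have hfin : ∑ i ∈ Finset.range N, F i ≤ c m' * δ ^ m' := by
    rw [hN_def, Finset.sum_range_succ]
    have h1 : ∑ i ∈ Finset.range m', F i ≤ 0 := by
      refine Finset.sum_nonpos fun m hm => ?_
      rw [Finset.mem_range] at hm
      rcases le_or_gt (c m) 0 with hc | hc
      · rw [hFm m]
        exact mul_nonpos_iff.mpr (Or.inr ⟨hc, sq_nonneg _⟩)
      · have hmS₀ : m ∈ S₀ := by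
          rw [hS₀_def]
          exact Finset.mem_filter.mpr ⟨Finset.mem_range.mpr hm, hc⟩
        have hmT : m ∈ T := hTsub (Finset.mem_insert_of_mem hmS₀)
        have hgm := hg m hmT
        rw [if_neg (Nat.ne_of_lt hm)] at hgm
        rw [hFm m, hgm]
        simp
    have h2 : F m' = c m' * δ ^ m' := by
      have hgm := hg m' hm'T
      rw [if_pos rfl] at hgm
      rw [hFm m', hgm, mul_one, hεp m']
    linarith
  have htail : ∑' i, F (i + N) ≤ D * δ ^ N := by
    have hb : ∀ i, F (i + N) ≤ C * (δ * W) ^ N * (|c (i + N)| * r₀ ^ i) := by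
      intro i
      have h1 : (δ * W) ^ i ≤ r₀ ^ i := pow_le_pow_left₀ hδW0 hδW i
      calc F (i + N) ≤ |F (i + N)| := le_abs_self _
        _ ≤ C * (|c (i + N)| * (δ * W) ^ (i + N)) := hFb _
        _ ≤ C * (δ * W) ^ N * (|c (i + N)| * r₀ ^ i) := by
            rw [pow_add]
            have h3 : |c (i + N)| * ((δ * W) ^ i * (δ * W) ^ N)
                ≤ |c (i + N)| * (r₀ ^ i * (δ * W) ^ N) := by
              refine mul_le_mul_of_nonneg_left ?_ (abs_nonneg _)
              exact mul_le_mul_of_nonneg_right h1 (by positivity)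
            calc C * (|c (i + N)| * ((δ * W) ^ i * (δ * W) ^ N))
                ≤ C * (|c (i + N)| * (r₀ ^ i * (δ * W) ^ N)) :=
                  mul_le_mul_of_nonneg_left h3 hC0
              _ = C * (δ * W) ^ N * (|c (i + N)| * r₀ ^ i) := by ring
    have hsum1 : Summable (fun i => F (i + N)) :=
      (summable_nat_add_iff N).mpr hFsummable
    have hsum2 : Summable (fun i => C * (δ * W) ^ N * (|c (i + N)| * r₀ ^ i)) :=
      hKsum.mul_left _
    calc ∑' i, F (i + N)
        ≤ ∑' i, C * (δ * W) ^ N * (|c (i + N)| * r₀ ^ i) :=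
          Summable.tsum_le_tsum hb hsum1 hsum2
      _ = C * (δ * W) ^ N * K := by rw [tsum_mul_left, hK_def]
      _ = D * δ ^ N := by rw [hD_def, mul_pow]; ring
  have hδle : δ ≤ (-c m') / (2 * (D + 1)) := min_le_right _ _
  have h2D : δ * (2 * (D + 1)) ≤ -c m' := (le_div_iff₀ h2d).mp hδle
  have hneg : c m' + D * δ < 0 := by nlinarith
  have hfinal : ∑' m, F m ≤ δ ^ m' * (c m' + D * δ) := by
    calc ∑' m, F m = (∑ i ∈ Finset.range N, F i) + ∑' i, F (i + N) := hsplit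
      _ ≤ c m' * δ ^ m' + D * δ ^ N := add_le_add hfin htail
      _ = δ ^ m' * (c m' + D * δ) := by rw [hN_def, pow_succ]; ring
  have hlt : δ ^ m' * (c m' + D * δ) < 0 :=
    mul_neg_of_pos_of_neg (pow_pos hδ0 m') hneg
  exact absurd (lt_of_le_of_lt (le_trans hQ hfinal) hlt) (lt_irrefl 0)

set_option maxHeartbeats 1000000 in
private lemma later (n : ℕ) (c : ℕ → ℝ)
    (hconv : ∀ x : ℝ, 0 ≤ x → ENNReal.ofReal x < (⊤ : ℝ≥0∞) →
      Summable (fun k => c k * x ^ k))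
    (hpres : ∀ u : Fin n → ℝ,
      (∀ j k, 0 ≤ u j * u k ∧ ENNReal.ofReal (u j * u k) < (⊤ : ℝ≥0∞)) →
      (Matrix.of fun j k : Fin n =>
        ∑' m : ℕ, c m * (u j * u k) ^ m).PosSemidef)
    (m' : ℕ) (hm' : c m' < 0) :
    ∃ S : Finset ℕ, S.card = n ∧ ∀ m ∈ S, m' < m ∧ 0 < c m := by
  classical
  by_contra hcontra
  have hGfin : {m : ℕ | m' < m ∧ 0 < c m}.Finite := by
    by_contra hinf
    have hinf' : Set.Infinite {m : ℕ | m' < m ∧ 0 < c m} := hinf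
    obtain ⟨S, hSsub, hScard⟩ := hinf'.exists_subset_card_eq n
    exact hcontra ⟨S, hScard, fun m hm => hSsub (Finset.mem_coe.mpr hm)⟩
  set S₀ : Finset ℕ := hGfin.toFinset with hS₀_def
  have hS₀card : S₀.card < n := by
    by_contra hge
    push_neg at hge
    obtain ⟨S, hSsub, hScard⟩ := Finset.exists_subset_card_eq hge
    refine hcontra ⟨S, hScard, fun m hm => ?_⟩
    have := hSsub hm
    rw [hS₀_def, Set.Finite.mem_toFinset] at this
    exact this
  obtain ⟨T, hTsub, hTcard⟩ := Infinite.exists_superset_card_eq (insert m' S₀) n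
    (le_trans (Finset.card_insert_le _ _) hS₀card)
  have hm'T : m' ∈ T := hTsub (Finset.mem_insert_self _ _)
  obtain ⟨g, C, hC0, hg, hgb, hpos⟩ :=
    core n ⊤ c hconv hpres T hTcard m' hm'T
  set W : ℝ := ((2:ℝ) ^ n) ^ 2 with hW_def
  have hW1 : (1:ℝ) ≤ W := by
    rw [hW_def]
    exact one_le_pow₀ (one_le_pow₀ one_le_two)
  have hW0 : (0:ℝ) < W := lt_of_lt_of_le one_pos hW1
  have habs : ∀ y : ℝ, 0 ≤ y → Summable (fun k => |c k| * y ^ k) := by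
    intro y hy
    exact abs_summable_of_lt (by linarith : (0:ℝ) < y + 1) hy (by linarith)
      (hconv (y + 1) (by linarith) ENNReal.ofReal_lt_top)
  set E : ℝ := ∑ m ∈ Finset.range m', C * (|c m| * W ^ m) with hE_def
  have hE0 : 0 ≤ E := Finset.sum_nonneg fun m _ => by positivity
  have hcm : 0 < -c m' := by linarith
  set δ : ℝ := max 1 ((E + 1) / (-c m')) with hδ_def
  have hδ1 : (1:ℝ) ≤ δ := le_max_left _ _
  have hδ0 : (0:ℝ) < δ := lt_of_lt_of_le one_pos hδ1
  set ε : ℝ := Real.sqrt δ with hε_def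
  have hε0 : 0 < ε := Real.sqrt_pos.mpr hδ0
  have hε2 : ε ^ 2 = δ := Real.sq_sqrt hδ0.le
  have hεp : ∀ m : ℕ, (ε ^ m) ^ 2 = δ ^ m := by
    intro m
    rw [← pow_mul, Nat.mul_comm, pow_mul, hε2]
  have hcon : ∀ j k : Fin n,
      ENNReal.ofReal ((ε * 2 ^ (j:ℕ)) * (ε * 2 ^ (k:ℕ))) < (⊤ : ℝ≥0∞) :=
    fun j k => ENNReal.ofReal_lt_top
  have hQ := hpos ε hε0 hcon
  set F : ℕ → ℝ := fun m => c m * (ε ^ m * g m) ^ 2 with hF_def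
  have hFm : ∀ m, F m = c m * (ε ^ m * g m) ^ 2 := fun m => rfl
  have hδW0 : 0 ≤ δ * W := mul_nonneg hδ0.le hW0.le
  have hFb : ∀ m, |F m| ≤ C * (|c m| * (δ * W) ^ m) := by
    intro m
    have habs2 : |F m| = |c m| * ((ε ^ m) ^ 2 * (g m) ^ 2) := by
      rw [hFm m, abs_mul, mul_pow,
        abs_of_nonneg (by positivity : (0:ℝ) ≤ (ε ^ m) ^ 2 * (g m) ^ 2)]
    rw [habs2, hεp m]
    calc |c m| * (δ ^ m * (g m) ^ 2)
        ≤ |c m| * (δ ^ m * (C * W ^ m)) := by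
          refine mul_le_mul_of_nonneg_left ?_ (abs_nonneg _)
          exact mul_le_mul_of_nonneg_left (hgb m) (pow_nonneg hδ0.le m)
      _ = C * (|c m| * (δ * W) ^ m) := by rw [mul_pow]; ring
  have hFsummable : Summable F := by
    have habs3 : Summable (fun m => C * (|c m| * (δ * W) ^ m)) :=
      (habs (δ * W) hδW0).mul_left C
    exact (Summable.of_nonneg_of_le (fun m => abs_nonneg _) hFb habs3).of_abs
  set N : ℕ := m' + 1 with hN_def
  have hsplit : ∑' m, F m = (∑ i ∈ Finset.range N, F i) + ∑' i, F (i + N) :=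
    (Summable.sum_add_tsum_nat_add N hFsummable).symm
  have htail : ∑' i, F (i + N) ≤ 0 := by
    refine tsum_nonpos fun i => ?_
    rcases le_or_gt (c (i + N)) 0 with hc | hc
    · rw [hFm (i + N)]
      exact mul_nonpos_iff.mpr (Or.inr ⟨hc, sq_nonneg _⟩)
    · have hmG : (i + N) ∈ S₀ := by
        rw [hS₀_def, Set.Finite.mem_toFinset]
        exact ⟨by omega, hc⟩
      have hmT : (i + N) ∈ T := hTsub (Finset.mem_insert_of_mem hmG)
      have hgm := hg (i + N) hmT
      rw [if_neg (by omega : i + N ≠ m')] at hgm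
      rw [hFm (i + N), hgm]
      simp
  have hFm' : F m' = c m' * δ ^ m' := by
    have hgm := hg m' hm'T
    rw [if_pos rfl] at hgm
    rw [hFm m', hgm, mul_one, hεp m']
  have hA : (∑ m ∈ Finset.range m', F m) * δ ≤ E * δ ^ m' := by
    rw [Finset.sum_mul, hE_def, Finset.sum_mul]
    refine Finset.sum_le_sum fun m hm => ?_
    rw [Finset.mem_range] at hm
    have h1 : F m ≤ C * (|c m| * (δ * W) ^ m) := le_trans (le_abs_self _) (hFb m)
    have h2 : δ ^ (m + 1) ≤ δ ^ m' := pow_le_pow_right₀ hδ1 (by omega)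
    calc F m * δ ≤ C * (|c m| * (δ * W) ^ m) * δ :=
          mul_le_mul_of_nonneg_right h1 hδ0.le
      _ = C * (|c m| * W ^ m) * δ ^ (m + 1) := by rw [mul_pow, pow_succ]; ring
      _ ≤ C * (|c m| * W ^ m) * δ ^ m' :=
          mul_le_mul_of_nonneg_left h2 (by positivity)
  have hsum_le : ∑' m, F m ≤ (∑ m ∈ Finset.range m', F m) + c m' * δ ^ m' := by
    calc ∑' m, F m = (∑ i ∈ Finset.range N, F i) + ∑' i, F (i + N) := hsplit
      _ ≤ ∑ i ∈ Finset.range N, F i := by linarith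
      _ = (∑ m ∈ Finset.range m', F m) + F m' := by
          rw [hN_def, Finset.sum_range_succ]
      _ = (∑ m ∈ Finset.range m', F m) + c m' * δ ^ m' := by rw [hFm']
  have hδge : (E + 1) / (-c m') ≤ δ := le_max_right _ _
  have hEc : E + 1 ≤ δ * (-c m') := (div_le_iff₀ hcm).mp hδge
  have hneg : E + c m' * δ < 0 := by nlinarith
  have hfinal : (∑' m, F m) * δ ≤ δ ^ m' * (E + c m' * δ) := by
    calc (∑' m, F m) * δ
        ≤ ((∑ m ∈ Finset.range m', F m) + c m' * δ ^ m') * δ :=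
          mul_le_mul_of_nonneg_right hsum_le hδ0.le
      _ = (∑ m ∈ Finset.range m', F m) * δ + c m' * δ ^ m' * δ := by ring
      _ ≤ E * δ ^ m' + c m' * δ ^ m' * δ := by linarith
      _ = δ ^ m' * (E + c m' * δ) := by ring
  have hlt : δ ^ m' * (E + c m' * δ) < 0 :=
    mul_neg_of_pos_of_neg (pow_pos hδ0 m') hneg
  have hQδ : 0 ≤ (∑' m, F m) * δ := mul_nonneg hQ hδ0.le
  exact absurd (lt_of_le_of_lt (le_trans hQδ hfinal) hlt) (lt_irrefl 0)

/-- Horn–Loewner-type lemma (Belton–Guillot–Khare–Putinar, Khare–Tao): if a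
power series `f(x) = Σ c_k x^k` convergent on `[0,ρ)` preserves positive
semidefiniteness entrywise on rank-one matrices in `P_n([0,ρ))`, and some
coefficient `c_{m'} < 0`, then at least `n` earlier coefficients are positive;
if moreover `ρ = ∞`, at least `n` later coefficients are positive as well. -/
theorem stmt8 (n : ℕ) (hn : 1 ≤ n) (ρ : ℝ≥0∞) (hρ : 0 < ρ) (c : ℕ → ℝ)
    (hconv : ∀ x : ℝ, 0 ≤ x → ENNReal.ofReal x < ρ →
      Summable (fun k => c k * x ^ k))
    (hpres : ∀ u : Fin n → ℝ,
      (∀ j k, 0 ≤ u j * u k ∧ ENNReal.ofReal (u j * u k) < ρ) →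
      (Matrix.of fun j k : Fin n =>
        ∑' m : ℕ, c m * (u j * u k) ^ m).PosSemidef)
    (m' : ℕ) (hm' : c m' < 0) :
    (ρ < ⊤ → ∃ S : Finset ℕ, S.card = n ∧ ∀ m ∈ S, m < m' ∧ 0 < c m) ∧
    (ρ = ⊤ →
      (∃ S : Finset ℕ, S.card = n ∧ ∀ m ∈ S, m < m' ∧ 0 < c m) ∧
      (∃ S : Finset ℕ, S.card = n ∧ ∀ m ∈ S, m' < m ∧ 0 < c m)) := by
  constructor
  · intro _
    exact earlier n ρ hρ c hconv hpres m' hm'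
  · intro h
    subst h
    exact ⟨earlier n ⊤ hρ c hconv hpres m' hm', later n c hconv hpres m' hm'⟩
end

section
/- Let 0 ≤ a < ∞ and ε > 0, let f : [a, a+ε) → ℝ be infinitely differentiable, fix an integer n ≥ 1, and fix distinct scalars u₁, …, uₙ ∈ (0, 1), writing u = (u₁, …, uₙ)ᵀ. Suppose that the n × n matrix f[a·J + t·u uᵀ] is positive semidefinite for all t ∈ [0, ε), where J is the n × n all-ones matrix. Then the first n non-zero derivatives of f at a are positive; that is, for every integer k ≥ 0, if f^(k)(a) ≠ 0 and the number of indices 0 ≤ j < k with f^(j)(a) ≠ 0 is strictly less than n, then f^(k)(a) > 0. -/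
open Set Finset
open scoped Nat


lemma fewnomial : ∀ (m : ℕ) (E : Finset ℕ) (c : ℕ → ℝ), E.card = m + 1 →
    (∀ e ∈ E, c e ≠ 0) → ∀ (r : Fin (m + 1) → ℝ), StrictMono r → (∀ i, 0 < r i) →
    (∀ i, ∑ e ∈ E, c e * r i ^ e = 0) → False := by
  intro m
  induction m with
  | zero =>
    intro E c hcard hc r hmono hpos hroot
    obtain ⟨e₀, rfl⟩ := Finset.card_eq_one.1 hcard
    have h0 := hroot 0
    simp only [Finset.sum_singleton] at h0
    exact (mul_ne_zero (hc e₀ (Finset.mem_singleton_self e₀))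
      (pow_ne_zero _ (hpos 0).ne')) h0
  | succ m ih =>
    intro E c hcard c_ne r hmono hpos hroot
    have hEne : E.Nonempty := Finset.card_pos.1 (by omega)
    set e₀ := E.min' hEne with he₀
    have he₀E : e₀ ∈ E := E.min'_mem hEne
    have hmin : ∀ e ∈ E, e₀ ≤ e := fun e he => E.min'_le e he
    -- the divided function
    set g : ℝ → ℝ := fun x => ∑ e ∈ E, c e * x ^ (e - e₀) with hg
    have hgroot : ∀ i, g (r i) = 0 := by
      intro i
      have h0 := hroot i
      have : (∑ e ∈ E, c e * r i ^ (e - e₀)) * r i ^ e₀ = 0 := by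
        rw [Finset.sum_mul]
        rw [← h0]
        apply Finset.sum_congr rfl
        intro e he
        rw [mul_assoc, ← pow_add]
        congr 2
        have := hmin e he
        omega
      rcases mul_eq_zero.1 this with h | h
      · exact h
      · exact absurd h (pow_ne_zero _ (hpos i).ne')
    have hgderiv : ∀ x : ℝ, HasDerivAt g
        (∑ e ∈ E, c e * (((e - e₀ : ℕ) : ℝ) * x ^ (e - e₀ - 1))) x := by
      intro x
      apply HasDerivAt.fun_sum
      intro e _
      exact (hasDerivAt_pow (e - e₀) x).const_mul (c e)
    have hgcont : Continuous g := by
      apply continuous_finset_sum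
      intro e _
      exact continuous_const.mul (continuous_pow _)
    -- Rolle roots
    have hrolle : ∀ i : Fin (m + 1), ∃ x ∈ Ioo (r i.castSucc) (r i.succ),
        deriv g x = 0 := by
      intro i
      exact exists_deriv_eq_zero (hmono (Fin.castSucc_lt_succ (i := i)))
        hgcont.continuousOn
        (by rw [hgroot i.castSucc, hgroot i.succ])
    choose ξ hξmem hξval using hrolle
    have hξroot : ∀ i, ∑ e ∈ E, c e * (((e - e₀ : ℕ) : ℝ) * ξ i ^ (e - e₀ - 1)) = 0 := by
      intro i
      rw [← (hgderiv (ξ i)).deriv]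
      exact hξval i
    -- new exponent set
    set E' : Finset ℕ := (E.erase e₀).image (fun e => e - (e₀ + 1)) with hE'
    have hgt : ∀ e ∈ E.erase e₀, e₀ + 1 ≤ e := by
      intro e he
      have h1 := Finset.ne_of_mem_erase he
      have h2 := hmin e (Finset.mem_of_mem_erase he)
      omega
    have hinj : Set.InjOn (fun e => e - (e₀ + 1)) (E.erase e₀ : Set ℕ) := by
      intro x hx y hy hxy
      have := hgt x hx; have := hgt y hy
      simp only at hxy
      omega
    have hcard' : E'.card = m + 1 := by
      rw [hE', Finset.card_image_of_injOn hinj, Finset.card_erase_of_mem he₀E, hcard]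
      omega
    set c' : ℕ → ℝ := fun d => c (d + (e₀ + 1)) * ((d + 1 : ℕ) : ℝ) with hc'
    have hc'ne : ∀ d ∈ E', c' d ≠ 0 := by
      intro d hd
      obtain ⟨e, he, rfl⟩ := Finset.mem_image.1 hd
      have h1 := hgt e he
      have : e - (e₀ + 1) + (e₀ + 1) = e := by omega
      show c (e - (e₀ + 1) + (e₀ + 1)) * ((e - (e₀ + 1) + 1 : ℕ) : ℝ) ≠ 0
      rw [this]
      exact mul_ne_zero (c_ne e (Finset.mem_of_mem_erase he))
        (Nat.cast_ne_zero.2 (by omega))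
    -- ξ strict mono, positive
    have hξmono : StrictMono ξ := by
      intro i j hij
      calc ξ i < r i.succ := (hξmem i).2
        _ ≤ r j.castSucc := hmono.monotone (Fin.succ_le_castSucc_iff.2 hij)
        _ < ξ j := (hξmem j).1
    have hξpos : ∀ i, 0 < ξ i := fun i => (hpos _).trans (hξmem i).1
    apply ih E' c' hcard' hc'ne ξ hξmono hξpos
    intro i
    rw [← hξroot i]
    rw [hE', Finset.sum_image hinj]
    have he₀zero : c e₀ * (((e₀ - e₀ : ℕ) : ℝ) * ξ i ^ (e₀ - e₀ - 1)) = 0 := by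
      rw [Nat.sub_self]
      norm_num
    rw [← Finset.sum_erase E he₀zero]
    apply Finset.sum_congr rfl
    intro e he
    have h1 := hgt e he
    have h2 : e - (e₀ + 1) + (e₀ + 1) = e := by omega
    have h3 : e - (e₀ + 1) + 1 = e - e₀ := by omega
    have h4 : e - (e₀ + 1) = e - e₀ - 1 := by omega
    show c (e - (e₀ + 1) + (e₀ + 1)) * ((e - (e₀ + 1) + 1 : ℕ) : ℝ) * ξ i ^ (e - (e₀ + 1))
      = c e * (((e - e₀ : ℕ) : ℝ) * ξ i ^ (e - e₀ - 1))
    rw [h2, h4, show e - e₀ - 1 + 1 = e - e₀ from by omega]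
    ring

lemma fewnomial' (E : Finset ℕ) (c : ℕ → ℝ) (hne : ∀ e ∈ E, c e ≠ 0)
    (T : Finset ℝ) (hT : ∀ x ∈ T, 0 < x) (hroot : ∀ x ∈ T, ∑ e ∈ E, c e * x ^ e = 0)
    (hcard : E.card ≤ T.card) : E = ∅ := by
  by_contra hE
  obtain ⟨m, hm⟩ : ∃ m, E.card = m + 1 := by
    have := Finset.card_pos.2 (Finset.nonempty_of_ne_empty hE)
    exact ⟨E.card - 1, by omega⟩
  have hle : m + 1 ≤ T.card := hm ▸ hcard
  set σ := T.orderIsoOfFin rfl with hσ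
  set r : Fin (m + 1) → ℝ := fun i => (σ (Fin.castLE hle i) : ℝ) with hr
  have hrmono : StrictMono r := by
    intro i j hij
    have h1 : (Fin.castLE hle i) < (Fin.castLE hle j) := hij
    exact_mod_cast σ.lt_iff_lt.2 h1
  have hrpos : ∀ i, 0 < r i := fun i => hT _ (σ _).2
  have hrroot : ∀ i, ∑ e ∈ E, c e * r i ^ e = 0 := fun i => hroot _ (σ _).2
  exact fewnomial m E c hm hne r hrmono hrpos hrroot

lemma exists_coeffs (n : ℕ) (u : Fin n → ℝ) (hu0 : ∀ i, 0 < u i)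
    (huinj : Function.Injective u) (S : Finset ℕ) (k : ℕ) (hkS : k ∉ S)
    (hcard : S.card < n) :
    ∃ c : Fin n → ℝ, (∀ j ∈ S, ∑ i, c i * u i ^ j = 0) ∧ (∑ i, c i * u i ^ k ≠ 0) := by
  classical
  set v : ℕ → EuclideanSpace ℝ (Fin n) := fun e => WithLp.toLp 2 (fun i => u i ^ e) with hv
  set W : Submodule ℝ (EuclideanSpace ℝ (Fin n)) :=
    Submodule.span ℝ (Set.range (fun j : {x // x ∈ S} => v j)) with hW
  have hT : (Finset.image u Finset.univ).card = n := by
    rw [Finset.card_image_of_injective _ huinj, Finset.card_univ, Fintype.card_fin]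
  have hvk : v k ∉ W := by
    intro hmem
    rw [hW, Submodule.mem_span_range_iff_exists_fun] at hmem
    obtain ⟨a, ha⟩ := hmem
    set d : ℕ → ℝ := fun e => if e = k then 1 else if h : e ∈ S then -a ⟨e, h⟩ else 0 with hd
    have hdk : d k = 1 := by simp [hd]
    have hroot : ∀ x ∈ Finset.image u Finset.univ, ∑ e ∈ insert k S, d e * x ^ e = 0 := by
      intro x hx
      obtain ⟨i, -, rfl⟩ := Finset.mem_image.1 hx
      have hcoord : ∑ j : {x // x ∈ S}, a j * u i ^ (j : ℕ) = u i ^ k := by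
        have h1 := congrArg (EuclideanSpace.proj (𝕜 := ℝ) i) ha
        simpa [hv, map_sum, smul_eq_mul] using h1
      rw [Finset.sum_insert hkS, hdk]
      have h2 : ∑ e ∈ S, d e * u i ^ e = -∑ j : {x // x ∈ S}, a j * u i ^ (j : ℕ) := by
        rw [← Finset.sum_coe_sort S (fun e => d e * u i ^ e), ← Finset.sum_neg_distrib]
        apply Finset.sum_congr rfl
        intro j _
        have hjk : (j : ℕ) ≠ k := fun h => hkS (h ▸ j.2)
        have : d (j : ℕ) = -a ⟨(j : ℕ), j.2⟩ := by simp [hd, hjk, j.2]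
        rw [this]
        ring
      rw [h2, hcoord]
      ring
    set E := (insert k S).filter (fun e => d e ≠ 0) with hE
    have hkE : k ∈ E := by
      rw [hE, Finset.mem_filter]
      exact ⟨Finset.mem_insert_self _ _, by rw [hdk]; norm_num⟩
    have hEcard : E.card ≤ (Finset.image u Finset.univ).card := by
      calc E.card ≤ (insert k S).card := Finset.card_filter_le _ _
        _ ≤ S.card + 1 := Finset.card_insert_le _ _
        _ ≤ n := hcard
        _ = _ := hT.symm
    have hEemp := fewnomial' E d (fun e he => (Finset.mem_filter.1 he).2)
      (Finset.image u Finset.univ)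
      (by rintro x hx; obtain ⟨i, -, rfl⟩ := Finset.mem_image.1 hx; exact hu0 i)
      (by
        intro x hx
        rw [hE, Finset.sum_filter_of_ne]
        · exact hroot x hx
        · intro e _ hne
          exact fun h0 => hne (by rw [h0]; ring))
      hEcard
    rw [hEemp] at hkE
    exact absurd hkE (Finset.notMem_empty k)
  haveI : FiniteDimensional ℝ W := FiniteDimensional.span_of_finite ℝ (Set.finite_range _)
  set cV : EuclideanSpace ℝ (Fin n) := v k - (W.orthogonalProjection (v k) : EuclideanSpace ℝ (Fin n)) with hcV
  have hmemO : cV ∈ Wᗮ := Submodule.sub_starProjection_mem_orthogonal (v k)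
  have hcne : cV ≠ 0 := by
    intro h0
    apply hvk
    have h1 : v k = (W.orthogonalProjection (v k) : EuclideanSpace ℝ (Fin n)) := by
      rw [hcV, sub_eq_zero] at h0; exact h0
    rw [h1]
    exact (W.orthogonalProjection (v k)).2
  have hinner : ∀ (x : EuclideanSpace ℝ (Fin n)),
      (inner ℝ x cV : ℝ) = ∑ i, x i * cV i := by
    intro x
    rw [PiLp.inner_apply]
    simp [RCLike.inner_apply, mul_comm]
  refine ⟨fun i => cV i, ?_, ?_⟩
  · intro j hj
    have hvj : v j ∈ W := Submodule.subset_span ⟨⟨j, hj⟩, rfl⟩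
    have h0 : (inner ℝ (v j) cV : ℝ) = 0 := (Submodule.mem_orthogonal W cV).1 hmemO (v j) hvj
    rw [hinner] at h0
    rw [← h0]
    apply Finset.sum_congr rfl
    intro i _
    rw [hv]
    ring
  · have h0 : (inner ℝ (v k) cV : ℝ) = (inner ℝ cV cV : ℝ) := by
      have hdecomp : v k = cV + (W.orthogonalProjection (v k) : EuclideanSpace ℝ (Fin n)) := by
        rw [hcV]; abel
      rw [hdecomp, inner_add_left]
      have hp : (inner ℝ ((W.orthogonalProjection (v k) : EuclideanSpace ℝ (Fin n))) cV : ℝ) = 0 :=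
        (Submodule.mem_orthogonal W cV).1 hmemO _ (W.orthogonalProjection (v k)).2
      rw [hp, add_zero]
    have hne0 : (inner ℝ (v k) cV : ℝ) ≠ 0 := by
      rw [h0]
      exact fun h => hcne (inner_self_eq_zero.1 h)
    rw [hinner] at hne0
    intro hcontra
    apply hne0
    rw [← hcontra]
    apply Finset.sum_congr rfl
    intro i _
    rw [hv]
    ring

lemma myCongrSet {f : ℝ → ℝ} {s t : Set ℝ} {x : ℝ} (h : s =ᶠ[nhds x] t) (m : ℕ) :
    iteratedDerivWithin m f s x = iteratedDerivWithin m f t x := by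
  rw [iteratedDerivWithin_eq_iteratedFDerivWithin, iteratedDerivWithin_eq_iteratedFDerivWithin,
    iteratedFDerivWithin_congr_set h]

open scoped Classical in
/-- Khare's strengthened Horn–Loewner theorem (case `p = 0`): if `f` is smooth
on `[a, a+ε)` with `a ≥ 0`, `u ∈ (0,1)^n` has distinct coordinates, and
`f[a 1_{n×n} + t u uᵀ]` is positive semidefinite for all `t ∈ [0,ε)`, then the
first `n` non-zero derivatives of `f` at `a` are positive. -/
theorem stmt9 (a ε : ℝ) (ha : 0 ≤ a) (hε : 0 < ε) (f : ℝ → ℝ)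
    (hf : ContDiffOn ℝ (⊤ : ℕ∞) f (Set.Ico a (a + ε)))
    (n : ℕ) (hn : 1 ≤ n) (u : Fin n → ℝ)
    (hu : ∀ j, u j ∈ Set.Ioo (0 : ℝ) 1) (huinj : Function.Injective u)
    (hpres : ∀ t ∈ Set.Ico (0 : ℝ) ε,
      (Matrix.of fun j k : Fin n => f (a + t * (u j * u k))).PosSemidef)
    (k : ℕ) (hk : iteratedDerivWithin k f (Set.Ico a (a + ε)) a ≠ 0)
    (hcard : ((Finset.range k).filter
        (fun j => iteratedDerivWithin j f (Set.Ico a (a + ε)) a ≠ 0)).card < n) :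
    0 < iteratedDerivWithin k f (Set.Ico a (a + ε)) a := by
  have hsu : UniqueDiffOn ℝ (Set.Ico a (a + ε)) := uniqueDiffOn_Ico a (a + ε)
  have haein : a ∈ Set.Ico a (a + ε) := ⟨le_refl a, by linarith⟩
  have hkS : k ∉ (Finset.range k).filter
      (fun j => iteratedDerivWithin j f (Set.Ico a (a + ε)) a ≠ 0) := by
    intro h
    exact absurd (Finset.mem_range.1 (Finset.mem_filter.1 h).1) (lt_irrefl k)
  obtain ⟨c, hcS, hck⟩ := exists_coeffs n u (fun i => (hu i).1) huinj _ k hkS hcard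
  -- nonnegativity of the quadratic form
  have hq : ∀ t ∈ Set.Ico (0 : ℝ) ε,
      0 ≤ ∑ j, ∑ l, c j * c l * f (a + t * (u j * u l)) := by
    intro t ht
    have h1 := (hpres t ht).dotProduct_mulVec_nonneg c
    simp only [star_trivial, dotProduct, Matrix.mulVec, Matrix.of_apply] at h1
    calc (0 : ℝ) ≤ _ := h1
      _ = ∑ j, ∑ l, c j * c l * f (a + t * (u j * u l)) := by
        apply Finset.sum_congr rfl
        intro j _
        rw [Finset.mul_sum]
        apply Finset.sum_congr rfl
        intro l _
        ring
  -- algebraic identity used repeatedly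
  have step1 : ∀ (m : ℕ) (g : Fin n → Fin n → ℝ) (A : ℝ),
      (∀ j l, g j l = A * ((c j * u j ^ m) * (c l * u l ^ m))) →
      ∑ j, ∑ l, g j l = A * (∑ i, c i * u i ^ m) ^ 2 := by
    intro m g A hg
    rw [sq, Finset.sum_mul_sum]
    simp only [Finset.mul_sum]
    apply Finset.sum_congr rfl
    intro j _
    apply Finset.sum_congr rfl
    intro l _
    rw [hg j l]
  rcases Nat.eq_zero_or_pos k with hk0 | hkpos
  · -- k = 0
    subst hk0
    have hfa : iteratedDerivWithin 0 f (Set.Ico a (a + ε)) a = f a := by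
      rw [iteratedDerivWithin_zero]
    rw [hfa] at hk ⊢
    have h0 := hq 0 ⟨le_refl 0, hε⟩
    have key : ∑ j, ∑ l, c j * c l * f (a + 0 * (u j * u l))
        = f a * (∑ i, c i * u i ^ 0) ^ 2 := by
      apply step1
      intro j l
      rw [pow_zero, pow_zero]
      ring
    rw [key] at h0
    rcases lt_trichotomy (f a) 0 with hlt | heq | hgt
    · exfalso
      have hsq : 0 < (∑ i, c i * u i ^ 0) ^ 2 :=
        lt_of_le_of_ne (sq_nonneg _) (Ne.symm (pow_ne_zero 2 hck))
      nlinarith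
    · exact absurd heq hk
    · exact hgt
  -- k ≥ 1
  obtain ⟨k', rfl⟩ : ∃ k', k = k' + 1 := ⟨k - 1, by omega⟩
  by_contra hneg
  push_neg at hneg
  set L := iteratedDerivWithin (k' + 1) f (Set.Ico a (a + ε)) a with hL
  have hLneg : L < 0 := lt_of_le_of_ne hneg hk
  set sk := ∑ i, c i * u i ^ (k' + 1) with hsk
  have hsk2 : 0 < sk ^ 2 := lt_of_le_of_ne (sq_nonneg _) (Ne.symm (pow_ne_zero 2 hck))
  set B := ∑ j, ∑ l, |c j * c l * (u j * u l) ^ (k' + 1)| with hB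
  have hB0 : 0 ≤ B :=
    Finset.sum_nonneg fun j _ => Finset.sum_nonneg fun l _ => abs_nonneg _
  set η := (-L * sk ^ 2) / (2 * (B + 1)) with hη
  have hη0 : 0 < η := by
    apply div_pos
    · exact mul_pos (neg_pos.2 hLneg) hsk2
    · linarith
  -- continuity of the k-th derivative
  have hcont : ContinuousOn (iteratedDerivWithin (k' + 1) f (Set.Ico a (a + ε)))
      (Set.Ico a (a + ε)) := hf.continuousOn_iteratedDerivWithin (by exact_mod_cast le_top) hsu
  have hcw : ContinuousWithinAt (iteratedDerivWithin (k' + 1) f (Set.Ico a (a + ε)))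
      (Set.Ico a (a + ε)) a := hcont.continuousWithinAt haein
  obtain ⟨δ, hδ0, hδ⟩ := (Metric.tendsto_nhdsWithin_nhds.1 hcw) η hη0
  set t := min (ε / 2) (δ / 2) with ht
  have ht0 : 0 < t := lt_min (by linarith) (by linarith)
  have htε : t < ε := lt_of_le_of_lt (min_le_left _ _) (by linarith)
  have htδ : t < δ := lt_of_le_of_lt (min_le_right _ _) (by linarith)
  -- Taylor expansion with Lagrange remainder for each entry
  have hpair : ∀ j l : Fin n, ∃ ξ : ℝ, ξ ∈ Set.Ioo a (a + t * (u j * u l)) ∧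
      f (a + t * (u j * u l)) =
        (∑ m ∈ Finset.range (k' + 1), (m ! : ℝ)⁻¹ * (t * (u j * u l)) ^ m *
          iteratedDerivWithin m f (Set.Ico a (a + ε)) a) +
        iteratedDerivWithin (k' + 1) f (Set.Ico a (a + ε)) ξ *
          (t * (u j * u l)) ^ (k' + 1) / (k' + 1)! := by
    intro j l
    have hμ0 : 0 < u j * u l := mul_pos (hu j).1 (hu l).1
    have hμ1 : u j * u l < 1 := by
      nlinarith [(hu j).1, (hu j).2, (hu l).1, (hu l).2]
    have htμ : t * (u j * u l) < t := mul_lt_of_lt_one_right ht0 hμ1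
    have hax₁ : a < a + t * (u j * u l) := by nlinarith
    have hx₁lt : a + t * (u j * u l) < a + ε := by nlinarith
    have hsub : Set.Icc a (a + t * (u j * u l)) ⊆ Set.Ico a (a + ε) :=
      fun x hx => ⟨hx.1, lt_of_le_of_lt hx.2 hx₁lt⟩
    have hfIcc : ContDiffOn ℝ (k' : ℕ∞) f (Set.Icc a (a + t * (u j * u l))) :=
      (hf.mono hsub).of_le (by exact_mod_cast le_top)
    have hfd : DifferentiableOn ℝ
        (iteratedDerivWithin k' f (Set.Icc a (a + t * (u j * u l))))
        (Set.Ioo a (a + t * (u j * u l))) :=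
      ((hf.mono hsub).differentiableOn_iteratedDerivWithin
        (by exact_mod_cast WithTop.coe_lt_top k')
        (uniqueDiffOn_Icc hax₁)).mono Set.Ioo_subset_Icc_self
    obtain ⟨ξ, hξI, hξeq⟩ := taylor_mean_remainder_lagrange hax₁.ne
      (by rw [Set.uIcc_of_le hax₁.le]; exact_mod_cast hfIcc)
      (by rw [Set.uIcc_of_le hax₁.le, Set.uIoo_of_le hax₁.le]; exact hfd)
    rw [Set.uIcc_of_le hax₁.le] at hξeq
    rw [Set.uIoo_of_le hax₁.le] at hξI
    refine ⟨ξ, hξI, ?_⟩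
    have hca : ∀ m : ℕ, iteratedDerivWithin m f (Set.Icc a (a + t * (u j * u l))) a
        = iteratedDerivWithin m f (Set.Ico a (a + ε)) a := by
      intro m
      apply myCongrSet
      rw [Filter.eventuallyEq_set]
      filter_upwards [Iio_mem_nhds (lt_min hax₁ (show a < a + ε by linarith))] with y hy
      rw [Set.mem_Iio, lt_min_iff] at hy
      simp only [Set.mem_Icc, Set.mem_Ico]
      constructor
      · intro hx; exact ⟨hx.1, hy.2⟩
      · intro hx; exact ⟨hx.1, hy.1.le⟩
    have hcξ : iteratedDerivWithin (k' + 1) f (Set.Icc a (a + t * (u j * u l))) ξ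
        = iteratedDerivWithin (k' + 1) f (Set.Ico a (a + ε)) ξ := by
      apply myCongrSet
      rw [Filter.eventuallyEq_set]
      filter_upwards [Ioo_mem_nhds hξI.1 hξI.2] with y hy
      simp only [Set.mem_Icc, Set.mem_Ico]
      constructor
      · intro; exact ⟨hy.1.le, lt_trans hy.2 hx₁lt⟩
      · intro; exact ⟨hy.1.le, hy.2.le⟩
    rw [taylor_within_apply, sub_eq_iff_eq_add'] at hξeq
    rw [hξeq, hcξ]
    have hxa : a + t * (u j * u l) - a = t * (u j * u l) := by ring
    rw [hxa]
    congr 1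
    apply Finset.sum_congr rfl
    intro m _
    rw [hca m, smul_eq_mul]
  choose ξ hξmem hfx using hpair
  -- the quadratic form at t, split into Taylor polynomial + remainder
  have hQ := hq t ⟨ht0.le, htε⟩
  have hmain : ∑ j, ∑ l, c j * c l *
      (∑ m ∈ Finset.range (k' + 1), (m ! : ℝ)⁻¹ * (t * (u j * u l)) ^ m *
        iteratedDerivWithin m f (Set.Ico a (a + ε)) a) = 0 := by
    have hswap : ∑ j, ∑ l, c j * c l *
        (∑ m ∈ Finset.range (k' + 1), (m ! : ℝ)⁻¹ * (t * (u j * u l)) ^ m *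
          iteratedDerivWithin m f (Set.Ico a (a + ε)) a)
        = ∑ m ∈ Finset.range (k' + 1), ∑ j, ∑ l, c j * c l *
          ((m ! : ℝ)⁻¹ * (t * (u j * u l)) ^ m *
            iteratedDerivWithin m f (Set.Ico a (a + ε)) a) := by
      calc ∑ j, ∑ l, c j * c l *
          (∑ m ∈ Finset.range (k' + 1), (m ! : ℝ)⁻¹ * (t * (u j * u l)) ^ m *
            iteratedDerivWithin m f (Set.Ico a (a + ε)) a)
          = ∑ j : Fin n, ∑ m ∈ Finset.range (k' + 1), ∑ l, c j * c l *
            ((m ! : ℝ)⁻¹ * (t * (u j * u l)) ^ m *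
              iteratedDerivWithin m f (Set.Ico a (a + ε)) a) := by
            apply Finset.sum_congr rfl
            intro j _
            simp only [Finset.mul_sum]
            exact Finset.sum_comm
        _ = _ := Finset.sum_comm
    rw [hswap]
    apply Finset.sum_eq_zero
    intro m hm
    have hident : ∑ j, ∑ l, c j * c l *
        ((m ! : ℝ)⁻¹ * (t * (u j * u l)) ^ m *
          iteratedDerivWithin m f (Set.Ico a (a + ε)) a)
        = ((m ! : ℝ)⁻¹ * t ^ m * iteratedDerivWithin m f (Set.Ico a (a + ε)) a)
          * (∑ i, c i * u i ^ m) ^ 2 := by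
      apply step1
      intro j l
      have hp : (t * (u j * u l)) ^ m = t ^ m * (u j ^ m * u l ^ m) := by
        rw [mul_pow, mul_pow]
      rw [hp]
      ring
    rw [hident]
    by_cases h0 : iteratedDerivWithin m f (Set.Ico a (a + ε)) a = 0
    · rw [h0]; ring
    · have hmS : m ∈ (Finset.range (k' + 1)).filter
          (fun j => iteratedDerivWithin j f (Set.Ico a (a + ε)) a ≠ 0) :=
        Finset.mem_filter.2 ⟨hm, h0⟩
      rw [hcS m hmS]
      ring
  set R : ℝ := ∑ j, ∑ l, (c j * c l * (u j * u l) ^ (k' + 1)) *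
      iteratedDerivWithin (k' + 1) f (Set.Ico a (a + ε)) (ξ j l) with hR
  have hsplit : ∑ j, ∑ l, c j * c l * f (a + t * (u j * u l))
      = (∑ j, ∑ l, c j * c l *
          (∑ m ∈ Finset.range (k' + 1), (m ! : ℝ)⁻¹ * (t * (u j * u l)) ^ m *
            iteratedDerivWithin m f (Set.Ico a (a + ε)) a))
        + (t ^ (k' + 1) / (k' + 1)!) * R := by
    rw [hR, Finset.mul_sum, ← Finset.sum_add_distrib]
    apply Finset.sum_congr rfl
    intro j _
    rw [Finset.mul_sum, ← Finset.sum_add_distrib]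
    apply Finset.sum_congr rfl
    intro l _
    rw [hfx j l]
    have hp : (t * (u j * u l)) ^ (k' + 1) = t ^ (k' + 1) * (u j * u l) ^ (k' + 1) :=
      mul_pow _ _ _
    rw [mul_add, hp]
    congr 1
    field_simp
  rw [hsplit, hmain, zero_add] at hQ
  have htk : 0 < t ^ (k' + 1) / (k' + 1)! := by positivity
  have hR0 : 0 ≤ R := by
    by_contra hRneg
    push_neg at hRneg
    have := mul_neg_of_pos_of_neg htk hRneg
    linarith
  -- bound R from above
  have hwsum : ∑ j, ∑ l, c j * c l * (u j * u l) ^ (k' + 1) = sk ^ 2 := by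
    have h := step1 (k' + 1) (fun j l => c j * c l * (u j * u l) ^ (k' + 1)) 1
      (fun j l => by show c j * c l * (u j * u l) ^ (k' + 1) = _; rw [mul_pow]; ring)
    rw [h, hsk]
    ring
  have hdist : ∀ j l : Fin n,
      |iteratedDerivWithin (k' + 1) f (Set.Ico a (a + ε)) (ξ j l) - L| ≤ η := by
    intro j l
    have hμ0 : 0 < u j * u l := mul_pos (hu j).1 (hu l).1
    have hμ1 : u j * u l < 1 := by
      nlinarith [(hu j).1, (hu j).2, (hu l).1, (hu l).2]
    have htμ : t * (u j * u l) < t := mul_lt_of_lt_one_right ht0 hμ1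
    have h1 := (hξmem j l).1
    have h2 := (hξmem j l).2
    have hmem : ξ j l ∈ Set.Ico a (a + ε) := ⟨h1.le, by linarith⟩
    have hd : dist (ξ j l) a < δ := by
      rw [Real.dist_eq, abs_of_nonneg (by linarith)]
      linarith
    have := hδ hmem hd
    rw [Real.dist_eq] at this
    exact this.le
  have hbound : R ≤ L * sk ^ 2 + (B + 1) * η := by
    have hdecomp : R = L * sk ^ 2 + ∑ j, ∑ l,
        (c j * c l * (u j * u l) ^ (k' + 1)) *
          (iteratedDerivWithin (k' + 1) f (Set.Ico a (a + ε)) (ξ j l) - L) := by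
      rw [hR, ← hwsum, Finset.mul_sum, ← Finset.sum_add_distrib]
      apply Finset.sum_congr rfl
      intro j _
      rw [Finset.mul_sum, ← Finset.sum_add_distrib]
      apply Finset.sum_congr rfl
      intro l _
      ring
    rw [hdecomp]
    have hE : ∑ j, ∑ l, (c j * c l * (u j * u l) ^ (k' + 1)) *
        (iteratedDerivWithin (k' + 1) f (Set.Ico a (a + ε)) (ξ j l) - L) ≤ B * η := by
      calc ∑ j, ∑ l, (c j * c l * (u j * u l) ^ (k' + 1)) *
          (iteratedDerivWithin (k' + 1) f (Set.Ico a (a + ε)) (ξ j l) - L)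
          ≤ ∑ j, ∑ l, |c j * c l * (u j * u l) ^ (k' + 1)| * η := by
            apply Finset.sum_le_sum
            intro j _
            apply Finset.sum_le_sum
            intro l _
            calc (c j * c l * (u j * u l) ^ (k' + 1)) *
                (iteratedDerivWithin (k' + 1) f (Set.Ico a (a + ε)) (ξ j l) - L)
                ≤ |(c j * c l * (u j * u l) ^ (k' + 1)) *
                  (iteratedDerivWithin (k' + 1) f (Set.Ico a (a + ε)) (ξ j l) - L)| :=
                    le_abs_self _
              _ = |c j * c l * (u j * u l) ^ (k' + 1)| *
                  |iteratedDerivWithin (k' + 1) f (Set.Ico a (a + ε)) (ξ j l) - L| :=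
                    abs_mul _ _
              _ ≤ |c j * c l * (u j * u l) ^ (k' + 1)| * η :=
                    mul_le_mul_of_nonneg_left (hdist j l) (abs_nonneg _)
        _ = B * η := by
            rw [hB, Finset.sum_mul]
            apply Finset.sum_congr rfl
            intro j _
            rw [Finset.sum_mul]
    linarith [mul_le_mul_of_nonneg_right (show B ≤ B + 1 by linarith) hη0.le, hE]
  have hfinal : L * sk ^ 2 + (B + 1) * η = L * sk ^ 2 / 2 := by
    rw [hη]
    field_simp
    ring
  rw [hfinal] at hbound
  have hneg2 : L * sk ^ 2 < 0 := mul_neg_of_neg_of_pos hLneg hsk2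
  linarith
end

section
/- Let f : (0, ∞) → ℝ. The entrywise map f[−] preserves positive semidefiniteness on P_2((0, ∞)) if and only if f is non-negative, non-decreasing, and multiplicatively mid-convex, i.e., f(√(xy))² ≤ f(x) f(y) for all x, y > 0. -/
lemma psd2_det_nonneg {A : Matrix (Fin 2) (Fin 2) ℝ} (hA : A.PosSemidef) :
    0 ≤ A 0 0 * A 1 1 - A 0 1 * A 1 0 := by
  have h := hA.1.det_eq_prod_eigenvalues
  have h0 := hA.eigenvalues_nonneg 0
  have h1 := hA.eigenvalues_nonneg 1
  rw [Matrix.det_fin_two, Fin.prod_univ_two] at h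
  norm_num at h
  nlinarith [mul_nonneg h0 h1]

lemma psd2_of {a b c : ℝ} (ha : 0 ≤ a) (hc : 0 ≤ c) (h : b ^ 2 ≤ a * c) :
    (Matrix.of ![![a, b], ![b, c]]).PosSemidef := by
  rw [Matrix.posSemidef_iff_dotProduct_mulVec]
  constructor
  · ext i j
    fin_cases i <;> fin_cases j <;> rfl
  · intro x
    have : dotProduct (star x) ((Matrix.of ![![a, b], ![b, c]]).mulVec x) =
        a * (x 0) ^ 2 + 2 * b * (x 0 * x 1) + c * (x 1) ^ 2 := by
      simp [dotProduct, Matrix.mulVec, Fin.sum_univ_two]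
      ring
    rw [this]
    rcases eq_or_lt_of_le ha with h0 | h0
    · have hb0 : b = 0 := by nlinarith
      rw [← h0, hb0]
      nlinarith [mul_nonneg hc (sq_nonneg (x 1))]
    · nlinarith [sq_nonneg (a * x 0 + b * x 1),
        mul_nonneg (sub_nonneg.mpr h) (sq_nonneg (x 1))]

/-- Vasudeva's `2 × 2` characterization: `f : (0,∞) → ℝ` preserves positive
semidefiniteness entrywise on `P_2((0,∞))` iff `f` is non-negative,
non-decreasing, and multiplicatively mid-convex on `(0,∞)`. -/
theorem stmt11 (f : ℝ → ℝ) :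
    (∀ A : Matrix (Fin 2) (Fin 2) ℝ, A.PosSemidef →
        (∀ j k, 0 < A j k) → (A.map f).PosSemidef) ↔
    ((∀ x : ℝ, 0 < x → 0 ≤ f x) ∧
      MonotoneOn f (Set.Ioi (0 : ℝ)) ∧
      (∀ x y : ℝ, 0 < x → 0 < y →
        f (Real.sqrt (x * y)) ^ 2 ≤ f x * f y)) := by
  constructor
  · intro H
    have hnn : ∀ x : ℝ, 0 < x → 0 ≤ f x := by
      intro x hx
      have hA : (Matrix.of ![![x, x], ![x, x]]).PosSemidef :=
        psd2_of hx.le hx.le (by nlinarith)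
      have hpos : ∀ j k, 0 < (Matrix.of ![![x, x], ![x, x]]) j k := by
        intro j k; fin_cases j <;> fin_cases k <;> simpa using hx
      have h := (H _ hA hpos).dotProduct_mulVec_nonneg (Pi.single 0 1)
      simpa [dotProduct, Matrix.mulVec, Fin.sum_univ_two, Pi.single] using h
    refine ⟨hnn, ?_, ?_⟩
    · intro x hx y hy hxy
      simp only [Set.mem_Ioi] at hx hy
      have hA : (Matrix.of ![![y, x], ![x, x]]).PosSemidef :=
        psd2_of hy.le hx.le (by nlinarith)
      have hpos : ∀ j k, 0 < (Matrix.of ![![y, x], ![x, x]]) j k := by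
        intro j k; fin_cases j <;> fin_cases k <;> simp [hx, hy]
      have hd := psd2_det_nonneg (H _ hA hpos)
      simp [Matrix.map_apply] at hd
      rcases eq_or_lt_of_le (hnn x hx) with h0 | h0
      · rw [← h0]; exact hnn y hy
      · nlinarith
    · intro x y hx hy
      have hs : 0 < Real.sqrt (x * y) := Real.sqrt_pos.mpr (by positivity)
      have hsq : Real.sqrt (x * y) ^ 2 = x * y := Real.sq_sqrt (by positivity)
      have hA : (Matrix.of ![![x, Real.sqrt (x * y)], ![Real.sqrt (x * y), y]]).PosSemidef :=
        psd2_of hx.le hy.le (by rw [hsq])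
      have hpos : ∀ j k, 0 < (Matrix.of ![![x, Real.sqrt (x * y)], ![Real.sqrt (x * y), y]]) j k := by
        intro j k; fin_cases j <;> fin_cases k <;> simp [hx, hy, hs]
      have hd := psd2_det_nonneg (H _ hA hpos)
      simp [Matrix.map_apply] at hd
      nlinarith
  · rintro ⟨hnn, hmono, hmid⟩ A hA hpos
    set a := A 0 0 with ha
    set b := A 0 1 with hb
    set c := A 1 1 with hc
    have hba : A 1 0 = b := by
      have := congrArg (fun M => M 0 1) hA.1
      simpa [Matrix.conjTranspose_apply] using this
    have hdet : 0 ≤ a * c - b * b := by simpa [hba] using psd2_det_nonneg hA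
    have hapos : 0 < a := hpos 0 0
    have hbpos : 0 < b := hpos 0 1
    have hcpos : 0 < c := hpos 1 1
    have hble : b ≤ Real.sqrt (a * c) := by
      rw [show b = Real.sqrt (b ^ 2) from (Real.sqrt_sq hbpos.le).symm]
      exact Real.sqrt_le_sqrt (by nlinarith)
    have hfb : f b ≤ f (Real.sqrt (a * c)) :=
      hmono (Set.mem_Ioi.mpr hbpos) (Set.mem_Ioi.mpr (lt_of_lt_of_le hbpos hble)) hble
    have key : f b ^ 2 ≤ f a * f c := by
      calc f b ^ 2 ≤ f (Real.sqrt (a * c)) ^ 2 := by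
            have := hnn b hbpos
            nlinarith
        _ ≤ f a * f c := hmid a c hapos hcpos
    have hmap : A.map f = Matrix.of ![![f a, f b], ![f b, f c]] := by
      ext i j
      fin_cases i <;> fin_cases j <;> simp [Matrix.map_apply, hba, ha, hb, hc]
    rw [hmap]
    exact psd2_of (hnn a hapos) (hnn c hcpos) key
end

section
/- (FitzGerald–Horn) Let N ≥ 2 be an integer. (1) For every real number α ≥ N − 2 and every positive semidefinite N × N real matrix A = [a_{jk}] with non-negative entries, the entrywise power A^{∘α} := [a_{jk}^α] is positive semidefinite (with the convention 0^0 = 1). (2) For every real α with 0 < α < N − 2 that is not an integer, there exists a positive semidefinite N × N real matrix A with strictly positive entries such that A^{∘α} is not positive semidefinite. -/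
open Matrix Finset Real Filter

/-- quadratic form of a real matrix -/
lemma quad_eq {n : ℕ} (A : Matrix (Fin n) (Fin n) ℝ) (y : Fin n → ℝ) :
    dotProduct (star y) (A *ᵥ y) = ∑ j, ∑ k, y j * A j k * y k := by
  simp [dotProduct, Matrix.mulVec, Finset.mul_sum, mul_assoc]

lemma psd_quad {n : ℕ} {A : Matrix (Fin n) (Fin n) ℝ} (hA : A.PosSemidef) (y : Fin n → ℝ) :
    0 ≤ ∑ j, ∑ k, y j * A j k * y k := by
  rw [← quad_eq]; exact hA.dotProduct_mulVec_nonneg y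

lemma posSemidef_of {n : ℕ} {B : Matrix (Fin n) (Fin n) ℝ}
    (hsym : ∀ j k, B j k = B k j) (h : ∀ x : Fin n → ℝ, 0 ≤ ∑ j, ∑ k, x j * B j k * x k) :
    B.PosSemidef := by
  refine Matrix.PosSemidef.of_dotProduct_mulVec_nonneg ?_ fun x => by rw [quad_eq]; exact h x
  ext j k
  simp [Matrix.conjTranspose_apply, hsym j k]

lemma psd_symm_apply {n : ℕ} {A : Matrix (Fin n) (Fin n) ℝ} (hA : A.PosSemidef) (j k : Fin n) :
    A j k = A k j := by
  have := hA.1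
  rw [Matrix.IsHermitian] at this
  conv_lhs => rw [← this]
  simp [Matrix.conjTranspose_apply]

/-- Cauchy-Schwarz for PSD bilinear forms. -/
lemma psd_cs {n : ℕ} {A : Matrix (Fin n) (Fin n) ℝ} (hA : A.PosSemidef) (u v : Fin n → ℝ) :
    (∑ j, ∑ k, u j * A j k * v k) ^ 2 ≤
      (∑ j, ∑ k, u j * A j k * u k) * (∑ j, ∑ k, v j * A j k * v k) := by
  set a := ∑ j, ∑ k, v j * A j k * v k with ha
  set b := ∑ j, ∑ k, u j * A j k * v k with hb
  set c := ∑ j, ∑ k, u j * A j k * u k with hc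
  have key : ∀ s : ℝ, 0 ≤ a * (s * s) + (2 * b) * s + c := by
    intro s
    have h0 := psd_quad hA (fun j => u j + s * v j)
    have hbvu : (∑ j, ∑ k, v j * A j k * u k) = b := by
      rw [hb, Finset.sum_comm]
      refine Finset.sum_congr rfl fun j _ => ?_
      refine Finset.sum_congr rfl fun k _ => ?_
      rw [psd_symm_apply hA k j]; ring
    calc (0:ℝ) ≤ ∑ j, ∑ k, (u j + s * v j) * A j k * (u k + s * v k) := h0
      _ = c + s * b + s * ((∑ j, ∑ k, v j * A j k * u k) + s * a) := by
          rw [hc, hb, ha]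
          simp only [Finset.mul_sum, ← Finset.sum_add_distrib]
          refine Finset.sum_congr rfl fun j _ => ?_
          refine Finset.sum_congr rfl fun k _ => ?_
          ring
      _ = a * (s * s) + (2 * b) * s + c := by rw [hbvu]; ring
  have hd := discrim_le_zero key
  rw [discrim] at hd
  nlinarith [hd]

/-- Schur product theorem, quadratic-form version, over ℝ. -/
lemma dot_schur {n : ℕ} {A B : Matrix (Fin n) (Fin n) ℝ} (hA : A.PosSemidef)
    (hB : B.PosSemidef) (x : Fin n → ℝ) :
    0 ≤ ∑ j, ∑ k, x j * (A j k * B j k) * x k := by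
  obtain ⟨C, hC⟩ : ∃ C : Matrix (Fin n) (Fin n) ℝ, B = Cᴴ * C := by
    open scoped MatrixOrder in exact CStarAlgebra.nonneg_iff_eq_star_mul_self.mp hB.nonneg
  have hBe : ∀ j k, B j k = ∑ i, C i j * C i k := by
    intro j k
    rw [hC]
    simp [Matrix.mul_apply, Matrix.conjTranspose_apply]
  calc (0:ℝ) ≤ ∑ i, ∑ j, ∑ k, (x j * C i j) * A j k * (x k * C i k) :=
        Finset.sum_nonneg fun i _ => psd_quad hA _
    _ = ∑ j, ∑ i, ∑ k, (x j * C i j) * A j k * (x k * C i k) := Finset.sum_comm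
    _ = ∑ j, ∑ k, ∑ i, (x j * C i j) * A j k * (x k * C i k) :=
        Finset.sum_congr rfl fun j _ => Finset.sum_comm
    _ = ∑ j, ∑ k, x j * (A j k * B j k) * x k := by
        refine Finset.sum_congr rfl fun j _ => ?_
        refine Finset.sum_congr rfl fun k _ => ?_
        rw [hBe j k, Finset.mul_sum, Finset.mul_sum, Finset.sum_mul]
        exact Finset.sum_congr rfl fun i _ => by ring

/-- FTC identity for rpow, `1 ≤ α`. -/
lemma rpow_ftc (x y : ℝ) {α : ℝ} (hα : 1 ≤ α) :
    x ^ α - y ^ α = ∫ t in (0:ℝ)..1, α * (y + t * (x - y)) ^ (α - 1) * (x - y) := by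
  have hc : ∀ t : ℝ, HasDerivAt (fun s => (y + s * (x - y)) ^ α)
      (α * (y + t * (x - y)) ^ (α - 1) * (x - y)) t := by
    intro t
    have h1 : HasDerivAt (fun s : ℝ => y + s * (x - y)) (x - y) t := by
      simpa using ((hasDerivAt_id t).mul_const (x - y)).const_add y
    have h2 := (Real.hasDerivAt_rpow_const (x := y + t * (x - y)) (p := α) (Or.inr hα)).comp t h1
    exact h2
  have hcont : Continuous fun t : ℝ => α * (y + t * (x - y)) ^ (α - 1) * (x - y) := by
    apply Continuous.mul _ continuous_const
    apply Continuous.mul continuous_const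
    rw [continuous_iff_continuousAt]
    intro t
    have hcl : Continuous fun t : ℝ => y + t * (x - y) := by continuity
    exact (Real.continuousAt_rpow_const _ _ (Or.inr (by linarith))).comp hcl.continuousAt
  have := intervalIntegral.integral_eq_sub_of_hasDerivAt (a := (0:ℝ)) (b := 1)
    (fun t _ => hc t) (hcont.intervalIntegrable 0 1)
  rw [this]
  norm_num
open Matrix Finset Real Filter

lemma cont_aux (c e : ℝ) {α : ℝ} (hα : 1 ≤ α) :
    Continuous fun t : ℝ => α * (c + t * e) ^ (α - 1) * e := by
  apply Continuous.mul _ continuous_const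
  apply Continuous.mul continuous_const
  rw [continuous_iff_continuousAt]
  intro t
  have hcl : Continuous fun t : ℝ => c + t * e := by continuity
  exact (Real.continuousAt_rpow_const _ _ (Or.inr (by linarith))).comp hcl.continuousAt

lemma quad_single {n : ℕ} (A : Matrix (Fin n) (Fin n) ℝ) (u : Fin n → ℝ) (i : Fin n) :
    ∑ j, ∑ k, u j * A j k * (Pi.single i 1 : Fin n → ℝ) k = ∑ j, u j * A j i := by
  refine Finset.sum_congr rfl fun j _ => ?_
  rw [Finset.sum_eq_single i]
  · simp
  · intro k _ hk; simp [Pi.single_eq_of_ne hk]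
  · simp

lemma quad_single2 {n : ℕ} (A : Matrix (Fin n) (Fin n) ℝ) (i i' : Fin n) :
    ∑ j, ∑ k, (Pi.single i 1 : Fin n → ℝ) j * A j k * (Pi.single i' 1 : Fin n → ℝ) k = A i i' := by
  rw [quad_single]
  rw [Finset.sum_eq_single i]
  · simp
  · intro j _ hj; simp [Pi.single_eq_of_ne hj]
  · simp

lemma step_psd (n : ℕ) (α : ℝ) (hα1 : 1 ≤ α)
    (ih : ∀ B : Matrix (Fin n) (Fin n) ℝ, B.PosSemidef → (∀ j k, 0 ≤ B j k) →
        (Matrix.of fun j k => B j k ^ (α - 1)).PosSemidef)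
    (ih' : ∀ B : Matrix (Fin n) (Fin n) ℝ, B.PosSemidef → (∀ j k, 0 ≤ B j k) →
        (Matrix.of fun j k => B j k ^ α).PosSemidef)
    (A : Matrix (Fin (n+1)) (Fin (n+1)) ℝ) (hA : A.PosSemidef) (hA0 : ∀ j k, 0 ≤ A j k) :
    (Matrix.of fun j k => A j k ^ α).PosSemidef := by
  have hα0' : α ≠ 0 := by intro h; rw [h] at hα1; linarith
  refine posSemidef_of (fun j k => by simp only [Matrix.of_apply]; rw [psd_symm_apply hA]) ?_
  intro x
  simp only [Matrix.of_apply]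
  set i : Fin (n+1) := Fin.last n with hi
  by_cases ha : A i i = 0
  · -- degenerate case: last diagonal entry is zero
    have hvi : ∀ j, A j i = 0 := by
      intro j
      have hcs := psd_cs hA (Pi.single j 1) (Pi.single i 1)
      rw [quad_single2, quad_single2, quad_single2, ha, mul_zero] at hcs
      have h2 : A j i ^ 2 = 0 := le_antisymm hcs (sq_nonneg _)
      exact (pow_eq_zero_iff two_ne_zero).mp h2
    have hvi' : ∀ j, A i j = 0 := fun j => by rw [psd_symm_apply hA]; exact hvi j
    have hB' := ih' (A.submatrix Fin.castSucc Fin.castSucc) (hA.submatrix _)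
      (fun j k => hA0 _ _)
    have key := psd_quad hB' (fun j => x j.castSucc)
    simp only [Matrix.of_apply, Matrix.submatrix_apply] at key
    have heq : (∑ j : Fin (n+1), ∑ k, x j * A j k ^ α * x k)
        = ∑ j : Fin n, ∑ k : Fin n, x j.castSucc * A j.castSucc k.castSucc ^ α * x k.castSucc := by
      rw [Fin.sum_univ_castSucc (f := fun j => ∑ k, x j * A j k ^ α * x k)]
      have h1 : ∑ k, x (Fin.last n) * A (Fin.last n) k ^ α * x k = 0 :=
        Finset.sum_eq_zero fun k _ => by rw [hvi' k, Real.zero_rpow hα0']; ring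
      rw [h1, add_zero]
      refine Finset.sum_congr rfl fun j _ => ?_
      rw [Fin.sum_univ_castSucc (f := fun k => x j.castSucc * A j.castSucc k ^ α * x k)]
      rw [hvi j.castSucc, Real.zero_rpow hα0']
      ring_nf
    rw [heq]; exact key
  · -- main case
    have hapos : 0 < A i i := (hA0 i i).lt_of_ne (Ne.symm ha)
    set y : Fin (n+1) → Fin (n+1) → ℝ := fun j k => A j i * A k i / A i i with hy
    have hy0 : ∀ j k, 0 ≤ y j k := fun j k =>
      div_nonneg (mul_nonneg (hA0 j i) (hA0 k i)) hapos.le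
    -- A - y vanishes on the last row and column
    have hEr : ∀ j, A j i - y j i = 0 := by
      intro j; simp only [hy]
      rw [mul_div_assoc, div_self ha, mul_one, sub_self]
    have hEc : ∀ k, A i k - y i k = 0 := by
      intro k; simp only [hy]
      rw [mul_comm, mul_div_assoc, div_self ha, mul_one, psd_symm_apply hA i k, sub_self]
    -- split the quadratic form
    have hsplit : (∑ j, ∑ k, x j * A j k ^ α * x k)
        = (∑ j, ∑ k, x j * (y j k) ^ α * x k)
          + ∑ j, ∑ k, x j * x k * (A j k ^ α - (y j k) ^ α) := by
      simp only [← Finset.sum_add_distrib]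
      refine Finset.sum_congr rfl fun j _ => Finset.sum_congr rfl fun k _ => by ring
    rw [hsplit]
    have hT1 : 0 ≤ ∑ j, ∑ k, x j * (y j k) ^ α * x k := by
      have hterm : ∀ j k : Fin (n+1), x j * (y j k) ^ α * x k
          = (x j * A j i ^ α) * (x k * A k i ^ α) / A i i ^ α := by
        intro j k
        simp only [hy]
        rw [Real.div_rpow (mul_nonneg (hA0 j i) (hA0 k i)) hapos.le,
          Real.mul_rpow (hA0 j i) (hA0 k i)]
        ring
      simp only [hterm]
      have h2 : ∀ j : Fin (n+1), ∑ k, (x j * A j i ^ α) * (x k * A k i ^ α) / A i i ^ α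
          = (x j * A j i ^ α) * (∑ k, x k * A k i ^ α) / A i i ^ α := by
        intro j; rw [← Finset.sum_div, ← Finset.mul_sum]
      simp only [h2]
      rw [← Finset.sum_div, ← Finset.sum_mul]
      exact div_nonneg (mul_self_nonneg _) (Real.rpow_nonneg hapos.le _)
    have hT2 : 0 ≤ ∑ j, ∑ k, x j * x k * (A j k ^ α - (y j k) ^ α) := by
      set F : Fin (n+1) → Fin (n+1) → ℝ → ℝ := fun j k t =>
        x j * x k * (α * (y j k + t * (A j k - y j k)) ^ (α - 1) * (A j k - y j k)) with hF
      have hFcont : ∀ j k, Continuous (F j k) := fun j k =>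
        continuous_const.mul (cont_aux (y j k) (A j k - y j k) hα1)
      have hterm : ∀ j k : Fin (n+1), x j * x k * (A j k ^ α - (y j k) ^ α)
          = ∫ t in (0:ℝ)..1, F j k t := by
        intro j k
        rw [rpow_ftc (A j k) (y j k) hα1]
        exact (intervalIntegral.integral_const_mul _ _).symm
      simp only [hterm]
      have hswap1 : ∀ j : Fin (n+1), ∑ k, ∫ t in (0:ℝ)..1, F j k t
          = ∫ t in (0:ℝ)..1, ∑ k, F j k t := fun j =>
        (intervalIntegral.integral_finset_sum fun k _ =>
          (hFcont j k).intervalIntegrable 0 1).symm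
      simp only [hswap1]
      rw [← intervalIntegral.integral_finset_sum fun j _ =>
        ((continuous_finset_sum _ fun k _ => hFcont j k).intervalIntegrable 0 1)]
      apply intervalIntegral.integral_nonneg (by norm_num)
      intro t ht
      obtain ⟨ht0, ht1⟩ := ht
      -- quadratic form identities with the snoc extension
      have hyform : ∀ w : Fin n → ℝ, ∑ j, ∑ k, w j * y j.castSucc k.castSucc * w k
          = (∑ j, w j * A j.castSucc i) * (∑ j, w j * A j.castSucc i) / A i i := by
        intro w
        have h3 : ∀ j : Fin n, ∑ k, w j * y j.castSucc k.castSucc * w k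
            = (w j * A j.castSucc i) * (∑ k, w k * A k.castSucc i) / A i i := by
          intro j
          calc ∑ k, w j * y j.castSucc k.castSucc * w k
              = ∑ k, (w j * A j.castSucc i) * (w k * A k.castSucc i) / A i i :=
                Finset.sum_congr rfl fun k _ => by simp only [hy]; ring
            _ = (w j * A j.castSucc i) * (∑ k, w k * A k.castSucc i) / A i i := by
                rw [← Finset.sum_div, ← Finset.mul_sum]
        simp only [h3]
        rw [← Finset.sum_div, ← Finset.sum_mul]
      have hAform : ∀ w : Fin n → ℝ, ∑ j, ∑ k, w j * A j.castSucc k.castSucc * w k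
          = ∑ j, ∑ k, (Fin.snoc w 0 : Fin (n+1) → ℝ) j * A j k * (Fin.snoc w 0 : Fin (n+1) → ℝ) k := by
        intro w
        rw [Fin.sum_univ_castSucc (f := fun j => ∑ k, (Fin.snoc w 0 : Fin (n+1) → ℝ) j * A j k * (Fin.snoc w 0 : Fin (n+1) → ℝ) k)]
        have hlast : ∑ k, (Fin.snoc w 0 : Fin (n+1) → ℝ) (Fin.last n) * A (Fin.last n) k * (Fin.snoc w 0 : Fin (n+1) → ℝ) k = 0 :=
          Finset.sum_eq_zero fun k _ => by simp [Fin.snoc_last]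
        rw [hlast, add_zero]
        refine Finset.sum_congr rfl fun j _ => ?_
        rw [Fin.sum_univ_castSucc (f := fun k => (Fin.snoc w 0 : Fin (n+1) → ℝ) j.castSucc * A j.castSucc k * (Fin.snoc w 0 : Fin (n+1) → ℝ) k)]
        simp [Fin.snoc_castSucc, Fin.snoc_last]
      have hsform : ∀ w : Fin n → ℝ, ∑ j, w j * A j.castSucc i
          = ∑ j, ∑ k, (Fin.snoc w 0 : Fin (n+1) → ℝ) j * A j k * (Pi.single i 1 : Fin (n+1) → ℝ) k := by
        intro w
        rw [quad_single]
        rw [Fin.sum_univ_castSucc (f := fun j => (Fin.snoc w 0 : Fin (n+1) → ℝ) j * A j i)]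
        simp [Fin.snoc_castSucc, Fin.snoc_last]
      have hEpsd : (Matrix.of fun j k : Fin n =>
          A j.castSucc k.castSucc - y j.castSucc k.castSucc).PosSemidef := by
        refine posSemidef_of ?_ ?_
        · intro j k
          simp only [Matrix.of_apply, hy]
          rw [psd_symm_apply hA j.castSucc k.castSucc]
          ring_nf
        · intro w
          simp only [Matrix.of_apply]
          have hsplit2 : ∑ j, ∑ k, w j * (A j.castSucc k.castSucc - y j.castSucc k.castSucc) * w k
              = (∑ j, ∑ k, w j * A j.castSucc k.castSucc * w k)
                - ∑ j, ∑ k, w j * y j.castSucc k.castSucc * w k := by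
            rw [← Finset.sum_sub_distrib]
            refine Finset.sum_congr rfl fun j _ => ?_
            rw [← Finset.sum_sub_distrib]
            exact Finset.sum_congr rfl fun k _ => by ring
          rw [hsplit2, hyform w, hAform w]
          have hcs := psd_cs hA (Fin.snoc w 0 : Fin (n+1) → ℝ) (Pi.single i 1)
          rw [quad_single2, ← hsform w] at hcs
          have hss : (∑ j, w j * A j.castSucc i) * (∑ j, w j * A j.castSucc i) / A i i
              ≤ ∑ j, ∑ k, (Fin.snoc w 0 : Fin (n+1) → ℝ) j * A j k * (Fin.snoc w 0 : Fin (n+1) → ℝ) k := by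
            rw [div_le_iff₀ hapos]; nlinarith [hcs]
          linarith
      have hM0 : ∀ j k : Fin n, 0 ≤ y j.castSucc k.castSucc
          + t * (A j.castSucc k.castSucc - y j.castSucc k.castSucc) := by
        intro j k
        have h4 := hy0 j.castSucc k.castSucc
        have h5 := hA0 j.castSucc k.castSucc
        nlinarith
      have hMpsd : (Matrix.of fun j k : Fin n => y j.castSucc k.castSucc
          + t * (A j.castSucc k.castSucc - y j.castSucc k.castSucc)).PosSemidef := by
        refine posSemidef_of ?_ ?_
        · intro j k
          simp only [Matrix.of_apply, hy]
          rw [psd_symm_apply hA j.castSucc k.castSucc]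
          ring_nf
        · intro w
          simp only [Matrix.of_apply]
          have hsplit3 : ∑ j, ∑ k, w j * (y j.castSucc k.castSucc + t * (A j.castSucc k.castSucc - y j.castSucc k.castSucc)) * w k
              = (1 - t) * (∑ j, ∑ k, w j * y j.castSucc k.castSucc * w k)
                + t * (∑ j, ∑ k, w j * A j.castSucc k.castSucc * w k) := by
            simp only [Finset.mul_sum, ← Finset.sum_add_distrib]
            refine Finset.sum_congr rfl fun j _ => ?_
            refine Finset.sum_congr rfl fun k _ => ?_
            ring
          rw [hsplit3, hyform w, hAform w]
          have h1 : 0 ≤ (∑ j, w j * A j.castSucc i) * (∑ j, w j * A j.castSucc i) / A i i :=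
            div_nonneg (mul_self_nonneg _) hapos.le
          have h2 := psd_quad hA (Fin.snoc w 0 : Fin (n+1) → ℝ)
          nlinarith
      have hPpsd := ih _ hMpsd hM0
      have hschur := dot_schur hEpsd hPpsd (fun j => x j.castSucc)
      simp only [Matrix.of_apply] at hschur
      -- identify the integrand with the Schur quadratic form
      have hident : (∑ j, ∑ k, F j k t) = α * ∑ j : Fin n, ∑ k : Fin n,
          x j.castSucc * ((A j.castSucc k.castSucc - y j.castSucc k.castSucc)
            * (y j.castSucc k.castSucc + t * (A j.castSucc k.castSucc - y j.castSucc k.castSucc)) ^ (α - 1)) * x k.castSucc := by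
        rw [Finset.mul_sum]
        rw [Fin.sum_univ_castSucc (f := fun j => ∑ k, F j k t)]
        have hlastrow : ∑ k, F (Fin.last n) k t = 0 :=
          Finset.sum_eq_zero fun k _ => by
            simp only [hF]
            rw [← hi, hEc k]
            ring
        rw [hlastrow, add_zero]
        refine Finset.sum_congr rfl fun j _ => ?_
        rw [Finset.mul_sum]
        rw [Fin.sum_univ_castSucc (f := fun k => F j.castSucc k t)]
        have hlastcol : F j.castSucc (Fin.last n) t = 0 := by
          simp only [hF]
          rw [← hi, hEr j.castSucc]
          ring
        rw [hlastcol, add_zero]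
        refine Finset.sum_congr rfl fun k _ => ?_
        simp only [hF]
        ring
      rw [hident]
      exact mul_nonneg (by linarith) hschur
    linarith

lemma rpow_psd_one (α : ℝ) (A : Matrix (Fin 1) (Fin 1) ℝ) (hA : A.PosSemidef)
    (hA0 : ∀ j k, 0 ≤ A j k) : (Matrix.of fun j k => A j k ^ α).PosSemidef := by
  refine posSemidef_of (fun j k => by simp only [Matrix.of_apply]; rw [psd_symm_apply hA]) ?_
  intro x
  simp only [Matrix.of_apply, Fin.sum_univ_one]
  have := Real.rpow_nonneg (hA0 0 0) α
  nlinarith [mul_self_nonneg (x 0)]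

lemma rpow_psd_two (α : ℝ) (hα0 : 0 ≤ α) (A : Matrix (Fin 2) (Fin 2) ℝ) (hA : A.PosSemidef)
    (hA0 : ∀ j k, 0 ≤ A j k) : (Matrix.of fun j k => A j k ^ α).PosSemidef := by
  refine posSemidef_of (fun j k => by simp only [Matrix.of_apply]; rw [psd_symm_apply hA]) ?_
  intro x
  simp only [Matrix.of_apply, Fin.sum_univ_two]
  have hba : A 1 0 = A 0 1 := psd_symm_apply hA 1 0
  rw [hba]
  have hkey : ∀ s : ℝ, 0 ≤ A 1 1 * (s * s) + (2 * A 0 1) * s + A 0 0 := by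
    intro s
    have h0 := psd_quad hA (fun j => if j = 0 then 1 else s)
    simp only [Fin.sum_univ_two] at h0
    norm_num at h0
    rw [hba] at h0
    nlinarith [h0]
  have hd := discrim_le_zero hkey
  rw [discrim] at hd
  have hac : A 0 1 * A 0 1 ≤ A 0 0 * A 1 1 := by nlinarith
  set p := A 0 0 ^ α with hp
  set q := A 1 1 ^ α with hq
  set r := A 0 1 ^ α with hr
  have hp0 : 0 ≤ p := Real.rpow_nonneg (hA0 0 0) α
  have hq0 : 0 ≤ q := Real.rpow_nonneg (hA0 1 1) α
  have hr0 : 0 ≤ r := Real.rpow_nonneg (hA0 0 1) α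
  have hr2 : r ^ 2 ≤ p * q := by
    have h1 : r ^ 2 = (A 0 1 * A 0 1) ^ α := by
      rw [hr, sq, ← Real.mul_rpow (hA0 0 1) (hA0 0 1)]
    have h2 : (A 0 1 * A 0 1) ^ α ≤ (A 0 0 * A 1 1) ^ α :=
      Real.rpow_le_rpow (mul_self_nonneg _) hac hα0
    have h3 : (A 0 0 * A 1 1) ^ α = p * q := Real.mul_rpow (hA0 0 0) (hA0 1 1)
    rw [h1, ← h3]; exact h2
  by_cases hp0' : p = 0
  · have hrr : r = 0 := by nlinarith [sq_nonneg r]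
    rw [hp0', hrr]
    nlinarith [mul_self_nonneg (x 1), hq0]
  · have hpp : 0 < p := lt_of_le_of_ne hp0 (Ne.symm hp0')
    nlinarith [sq_nonneg (p * x 0 + r * x 1),
      mul_nonneg (sub_nonneg.mpr hr2) (sq_nonneg (x 1))]

lemma rpow_psd : ∀ (n : ℕ) (α : ℝ), (n : ℝ) - 2 ≤ α →
    ∀ A : Matrix (Fin n) (Fin n) ℝ, A.PosSemidef → (∀ j k, 0 ≤ A j k) →
    (Matrix.of fun j k => A j k ^ α).PosSemidef := by
  intro n
  induction n with
  | zero =>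
      intro α hα A hA hA0
      exact posSemidef_of (fun j k => j.elim0) (fun x => by simp)
  | succ n ih =>
      intro α hα A hA hA0
      match n, ih, hα with
      | 0, _, hα => exact rpow_psd_one α A hA hA0
      | 1, _, hα =>
          have hα0 : (0:ℝ) ≤ α := by push_cast at hα; linarith
          exact rpow_psd_two α hα0 A hA hA0
      | (m+2), ih, hα =>
          have hα1 : 1 ≤ α := by push_cast at hα; linarith
          refine step_psd (m+2) α hα1 ?_ ?_ A hA hA0
          · intro B hB hB0
            refine ih (α - 1) ?_ B hB hB0
            push_cast at hα ⊢; linarith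
          · intro B hB hB0
            refine ih α ?_ B hB hB0
            push_cast at hα ⊢; linarith

noncomputable def rchoose (α : ℝ) (k : ℕ) : ℝ :=
  (∏ i ∈ Finset.range k, (α - i)) / (k.factorial : ℝ)

lemma rchoose_zero (α : ℝ) : rchoose α 0 = 1 := by simp [rchoose]

lemma rchoose_succ_mul (α : ℝ) (k : ℕ) :
    ((k:ℝ) + 1) * rchoose α (k+1) = α * rchoose (α - 1) k := by
  have hprod : ∏ i ∈ Finset.range (k+1), (α - i)
      = (∏ i ∈ Finset.range k, ((α - 1) - i)) * α := by
    rw [Finset.prod_range_succ']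
    push_cast
    congr 1
    · exact Finset.prod_congr rfl fun i _ => by ring
    · norm_num
  have hfact : ((k+1).factorial : ℝ) = ((k:ℝ)+1) * (k.factorial : ℝ) := by
    rw [Nat.factorial_succ]; push_cast; ring
  have hk : ((k:ℝ)+1) ≠ 0 := by positivity
  have hf : (k.factorial : ℝ) ≠ 0 := Nat.cast_ne_zero.mpr k.factorial_ne_zero
  rw [rchoose, rchoose, hprod, hfact]
  field_simp

lemma rchoose_succ (α : ℝ) (k : ℕ) :
    rchoose α (k+1) = (α / ((k:ℝ)+1)) * rchoose (α - 1) k := by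
  have hk : ((k:ℝ)+1) ≠ 0 := by positivity
  field_simp
  linear_combination rchoose_succ_mul α k

lemma rchoose_tendsto : ∀ (k : ℕ) (α : ℝ), Filter.Tendsto
    (fun t : ℝ => ((1+t)^α - ∑ m ∈ Finset.range k, rchoose α m * t^m) / t^k)
    (nhdsWithin 0 (Set.Ioi 0)) (nhds (rchoose α k)) := by
  intro k
  induction k with
  | zero =>
      intro α
      simp only [Finset.range_zero, Finset.sum_empty, pow_zero, sub_zero, div_one]
      have hc : ContinuousAt (fun t : ℝ => (1+t)^α) 0 := by
        have h1 : Continuous fun t : ℝ => 1 + t := by continuity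
        exact (Real.continuousAt_rpow_const (1+0) α (Or.inl (by norm_num))).comp h1.continuousAt
      have := hc.tendsto.mono_left (nhdsWithin_le_nhds (s := Set.Ioi 0))
      rw [show ((1:ℝ)+0)^α = rchoose α 0 by rw [rchoose_zero]; norm_num [Real.one_rpow]] at this
      exact this
  | succ k ih =>
      intro α
      have hkR : ((k:ℝ)+1) ≠ 0 := by positivity
      apply HasDerivAt.lhopital_zero_nhdsGT
        (f' := fun t => α * (1+t)^(α-1) - ∑ m ∈ Finset.range (k+1), rchoose α m * (m * t^(m-1)))
        (g' := fun t => ((k:ℝ)+1) * t^k)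
      · filter_upwards [self_mem_nhdsWithin] with t (ht : 0 < t)
        have h1 : HasDerivAt (fun s : ℝ => (1+s)^α) (α * (1+t)^(α-1)) t := by
          have hne : (1:ℝ) + t ≠ 0 := by positivity
          have := (Real.hasDerivAt_rpow_const (x := 1+t) (p := α) (Or.inl hne)).comp t
            ((hasDerivAt_id t).const_add 1)
          rw [mul_one] at this
          exact this
        have h2 : HasDerivAt (fun s : ℝ => ∑ m ∈ Finset.range (k+1), rchoose α m * s^m)
            (∑ m ∈ Finset.range (k+1), rchoose α m * (m * t^(m-1))) t :=
          HasDerivAt.fun_sum fun m _ => (hasDerivAt_pow m t).const_mul (rchoose α m)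
        exact h1.sub h2
      · filter_upwards [self_mem_nhdsWithin] with t _
        simpa using hasDerivAt_pow (k+1) t
      · filter_upwards [self_mem_nhdsWithin] with t (ht : 0 < t)
        positivity
      · -- f → 0
        have hc : ContinuousAt (fun t : ℝ =>
            (1+t)^α - ∑ m ∈ Finset.range (k+1), rchoose α m * t^m) 0 := by
          apply ContinuousAt.sub
          · have h1 : Continuous fun t : ℝ => 1 + t := by continuity
            exact (Real.continuousAt_rpow_const (1+0) α (Or.inl (by norm_num))).comp
              h1.continuousAt
          · exact (continuous_finset_sum _ fun m _ =>
              continuous_const.mul (continuous_pow m)).continuousAt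
        have hval : (1+(0:ℝ))^α - ∑ m ∈ Finset.range (k+1), rchoose α m * (0:ℝ)^m = 0 := by
          have hsum : ∑ m ∈ Finset.range (k+1), rchoose α m * (0:ℝ)^m = rchoose α 0 := by
            rw [Finset.sum_eq_single 0]
            · norm_num
            · intro m _ hm
              rw [zero_pow hm, mul_zero]
            · intro h; exact absurd (Finset.mem_range.mpr (Nat.succ_pos k)) h
          rw [hsum, rchoose_zero]; norm_num [Real.one_rpow]
        have := hc.tendsto.mono_left (nhdsWithin_le_nhds (s := Set.Ioi 0))
        rwa [hval] at this
      · -- g → 0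
        have := ((continuous_pow (k+1)).continuousAt (x := (0:ℝ))).tendsto.mono_left
          (nhdsWithin_le_nhds (s := Set.Ioi 0))
        rwa [show (0:ℝ)^(k+1) = 0 by simp] at this
      · -- quotient of derivatives
        have hsum : ∀ t : ℝ, ∑ m ∈ Finset.range (k+1), rchoose α m * (m * t^(m-1))
            = α * ∑ m ∈ Finset.range k, rchoose (α-1) m * t^m := by
          intro t
          rw [Finset.sum_range_succ', Finset.mul_sum]
          simp only [Nat.cast_zero, zero_mul, mul_zero, add_zero]
          refine Finset.sum_congr rfl fun i _ => ?_
          have hms : i + 1 - 1 = i := rfl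
          rw [hms]
          push_cast
          linear_combination t^i * rchoose_succ_mul α i
        have heq : ∀ᶠ t in nhdsWithin (0:ℝ) (Set.Ioi 0),
            (α/((k:ℝ)+1)) * (((1+t)^(α-1) - ∑ m ∈ Finset.range k, rchoose (α-1) m * t^m) / t^k)
            = (α * (1+t)^(α-1) - ∑ m ∈ Finset.range (k+1), rchoose α m * (m * t^(m-1)))
              / (((k:ℝ)+1) * t^k) := by
          filter_upwards [self_mem_nhdsWithin] with t (ht : 0 < t)
          rw [hsum t]
          have htk : t^k ≠ 0 := by positivity
          field_simp
        have hlim := (ih (α-1)).const_mul (α/((k:ℝ)+1))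
        rw [show (α/((k:ℝ)+1)) * rchoose (α-1) k = rchoose α (k+1) from (rchoose_succ α k).symm] at hlim
        exact hlim.congr' heq

lemma div_aux (zz c ε X Q : ℝ) (k : ℕ) (hc : c ≠ 0) (hε : ε ≠ 0) :
    (zz * c^k) * ((X - Q)/(ε*c)^k) = (zz * X) / ε^k - (zz * Q) / ε^k := by
  have hck : c^k ≠ 0 := pow_ne_zero _ hc
  have hεk : ε^k ≠ 0 := pow_ne_zero _ hε
  rw [mul_pow]
  field_simp

lemma exists_not_psd (N : ℕ) (α : ℝ) (hα0 : 0 < α) (hαN : α < (N:ℝ) - 2)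
    (hni : ∀ m : ℤ, α ≠ (m:ℝ)) :
    ∃ A : Matrix (Fin N) (Fin N) ℝ, A.PosSemidef ∧ (∀ j k, 0 < A j k) ∧
      ¬ (Matrix.of fun j k : Fin N => A j k ^ α).PosSemidef := by
  classical
  -- basic facts about the floor
  have hfl0 : 0 ≤ ⌊α⌋ := Int.floor_nonneg.mpr hα0.le
  set f : ℕ := ⌊α⌋.toNat with hf
  have hfcast : (f : ℝ) = (⌊α⌋ : ℝ) := by
    rw [hf]; exact_mod_cast congrArg (Int.cast : ℤ → ℝ) (Int.toNat_of_nonneg hfl0)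
  have hflt : (f : ℝ) < α := by
    rw [hfcast]
    exact lt_of_le_of_ne (Int.floor_le α) (fun h => hni ⌊α⌋ h.symm)
  have hlt1 : α < (f : ℝ) + 1 := by
    rw [hfcast]; exact Int.lt_floor_add_one α
  set k : ℕ := f + 2 with hk
  -- the key negative coefficient
  have hCneg : rchoose α k < 0 := by
    have hprod : ∏ i ∈ Finset.range k, (α - i)
        = (∏ i ∈ Finset.range (f+1), (α - i)) * (α - ((f:ℝ)+1)) := by
      rw [hk, Finset.prod_range_succ]
      push_cast; ring_nf
    have hpos : 0 < ∏ i ∈ Finset.range (f+1), (α - i) := by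
      apply Finset.prod_pos
      intro i hi
      have : i ≤ f := Nat.lt_succ_iff.mp (Finset.mem_range.mp hi)
      have : (i:ℝ) ≤ (f:ℝ) := by exact_mod_cast this
      linarith
    have hneg : α - ((f:ℝ)+1) < 0 := by linarith
    have : (∏ i ∈ Finset.range k, (α - i)) < 0 := by
      rw [hprod]; exact mul_neg_of_pos_of_neg hpos hneg
    exact div_neg_of_neg_of_pos this (by exact_mod_cast k.factorial_pos)
  -- k + 1 ≤ N
  have hkN : k + 1 ≤ N := by
    have h1 : (f:ℝ) < (N:ℝ) - 2 := lt_trans hflt hαN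
    have h2 : (f:ℝ) + 3 ≤ (N:ℝ) := by
      have : ((f:ℕ):ℝ) + 2 < (N:ℝ) := by linarith
      have h3 : f + 2 < N := by exact_mod_cast this
      have h4 : f + 3 ≤ N := h3
      exact_mod_cast h4
    have : f + 3 ≤ N := by exact_mod_cast h2
    omega
  -- the node values
  set a : Fin N → ℝ := fun j => ((j:ℕ):ℝ) + 1 with ha
  have ha0 : ∀ j, 0 < a j := fun j => by positivity
  -- Vandermonde system
  set U : Matrix (Fin (k+1)) (Fin (k+1)) ℝ :=
    (Matrix.vandermonde (fun j : Fin (k+1) => ((j:ℕ):ℝ) + 1))ᵀ with hU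
  have hUdet : IsUnit U.det := by
    rw [hU, Matrix.det_transpose]
    apply Ne.isUnit
    rw [Matrix.det_vandermonde_ne_zero_iff]
    intro i j hij
    simp only at hij
    have h5 : ((i:ℕ):ℝ) = ((j:ℕ):ℝ) := by linarith
    exact Fin.ext (by exact_mod_cast h5)
  set w : Fin (k+1) → ℝ := U⁻¹ *ᵥ Pi.single (Fin.last k) 1 with hw
  have hUw : U *ᵥ w = Pi.single (Fin.last k) 1 := by
    rw [hw, Matrix.mulVec_mulVec, Matrix.mul_nonsing_inv U hUdet, Matrix.one_mulVec]
  -- the test vector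
  set z : Fin N → ℝ := fun j => if h : (j:ℕ) < k+1 then w ⟨(j:ℕ), h⟩ else 0 with hz
  -- the power sums
  set S : ℕ → ℝ := fun m => ∑ j : Fin N, z j * a j ^ m with hS
  have hSval : ∀ m : ℕ, m < k + 1 → S m = if m = k then 1 else 0 := by
    intro m hm
    have step1 : S m = ∑ j ∈ Finset.range N,
        (if h : j < k+1 then w ⟨j, h⟩ else 0) * ((j:ℝ) + 1) ^ m := by
      rw [hS]
      rw [← Fin.sum_univ_eq_sum_range (fun j => (if h : j < k+1 then w ⟨j, h⟩ else 0) * ((j:ℝ) + 1) ^ m) N]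
    have step2 : ∑ j ∈ Finset.range N,
        (if h : j < k+1 then w ⟨j, h⟩ else 0) * ((j:ℝ) + 1) ^ m
        = ∑ j ∈ Finset.range (k+1),
        (if h : j < k+1 then w ⟨j, h⟩ else 0) * ((j:ℝ) + 1) ^ m := by
      symm
      apply Finset.sum_subset (Finset.range_subset_range.mpr hkN)
      intro x _ hx
      rw [Finset.mem_range] at hx
      rw [dif_neg hx, zero_mul]
    have step3 : ∑ j ∈ Finset.range (k+1),
        (if h : j < k+1 then w ⟨j, h⟩ else 0) * ((j:ℝ) + 1) ^ m
        = ∑ j : Fin (k+1), w j * (((j:ℕ):ℝ) + 1) ^ m := by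
      rw [← Fin.sum_univ_eq_sum_range (fun j => (if h : j < k+1 then w ⟨j, h⟩ else 0) * ((j:ℝ) + 1) ^ m) (k+1)]
      refine Finset.sum_congr rfl fun j _ => ?_
      rw [dif_pos j.isLt]
    have step4 : ∑ j : Fin (k+1), w j * (((j:ℕ):ℝ) + 1) ^ m
        = (U *ᵥ w) ⟨m, hm⟩ := by
      simp only [Matrix.mulVec, dotProduct, hU, Matrix.transpose_apply,
        Matrix.vandermonde_apply, Fin.val_mk]
      exact Finset.sum_congr rfl fun j _ => by ring
    rw [step1, step2, step3, step4, hUw]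
    by_cases hmk : m = k
    · rw [if_pos hmk]
      have he : (⟨m, hm⟩ : Fin (k+1)) = Fin.last k := Fin.ext (by simpa [Fin.last] using hmk)
      rw [he, Pi.single_eq_same]
    · rw [if_neg hmk]
      have : (⟨m, hm⟩ : Fin (k+1)) ≠ Fin.last k := by
        intro h
        apply hmk
        have := congrArg Fin.val h
        simpa [Fin.last] using this
      rw [Pi.single_eq_of_ne this]
  have hSk : S k = 1 := by rw [hSval k (by omega), if_pos rfl]
  have hSm : ∀ m, m < k → S m = 0 := fun m hm => by
    rw [hSval m (by omega), if_neg (by omega)]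
  clear hk
  clear_value k
  -- quadratic form of the base matrix
  have hz_quad : ∀ ε : ℝ, 0 ≤ ε → ∀ u : Fin N → ℝ,
      0 ≤ ∑ j, ∑ l, u j * (1 + ε * (a j * a l)) * u l := by
    intro ε hε u
    have hterm : ∀ j : Fin N, ∑ l, u j * (1 + ε * (a j * a l)) * u l
        = u j * (∑ l, u l) + ε * ((u j * a j) * (∑ l, u l * a l)) := by
      intro j
      calc ∑ l, u j * (1 + ε * (a j * a l)) * u l
          = ∑ l, (u j * u l + ε * ((u j * a j) * (u l * a l))) :=
            Finset.sum_congr rfl fun l _ => by ring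
        _ = (∑ l, u j * u l) + ∑ l, ε * ((u j * a j) * (u l * a l)) :=
            Finset.sum_add_distrib
        _ = u j * (∑ l, u l) + ε * ((u j * a j) * (∑ l, u l * a l)) := by
            rw [← Finset.mul_sum, ← Finset.mul_sum, ← Finset.mul_sum]
    calc (0:ℝ) ≤ (∑ j, u j) * (∑ l, u l) + ε * ((∑ j, u j * a j) * (∑ l, u l * a l)) := by
          exact add_nonneg (mul_self_nonneg _) (mul_nonneg hε (mul_self_nonneg _))
      _ = ∑ j, ∑ l, u j * (1 + ε * (a j * a l)) * u l := by
          simp only [hterm]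
          rw [Finset.sum_add_distrib, ← Finset.sum_mul]
          congr 1
          rw [← Finset.mul_sum, ← Finset.sum_mul]
  -- the quadratic form at z, as a function of ε
  set F : ℝ → ℝ := fun ε => ∑ j, ∑ l, z j * (1 + ε * (a j * a l)) ^ α * z l with hF
  have hGlim : ∀ c : ℝ, 0 < c → Filter.Tendsto (fun ε : ℝ =>
      ((1 + ε*c)^α - ∑ m ∈ Finset.range k, rchoose α m * (ε*c)^m)/(ε*c)^k)
      (nhdsWithin 0 (Set.Ioi 0)) (nhds (rchoose α k)) := by
    intro c hc
    have hmap : Filter.Tendsto (fun ε : ℝ => ε * c)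
        (nhdsWithin 0 (Set.Ioi 0)) (nhdsWithin 0 (Set.Ioi 0)) := by
      rw [tendsto_nhdsWithin_iff]
      constructor
      · have h7 := (continuous_id.mul (continuous_const (y := c))).tendsto (0:ℝ)
        simp only [Pi.mul_apply, id_eq, zero_mul] at h7
        exact h7.mono_left (nhdsWithin_le_nhds (s := Set.Ioi 0))
      · filter_upwards [self_mem_nhdsWithin] with t (ht : 0 < t)
        exact Set.mem_Ioi.mpr (mul_pos ht hc)
    exact (rchoose_tendsto k α).comp hmap
  have hFlim : Filter.Tendsto (fun ε => F ε / ε^k)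
      (nhdsWithin 0 (Set.Ioi 0)) (nhds (rchoose α k)) := by
    have hterm : ∀ j l : Fin N, Filter.Tendsto (fun ε : ℝ =>
        (z j * z l * (a j * a l)^k) * (((1 + ε*(a j * a l))^α
          - ∑ m ∈ Finset.range k, rchoose α m * (ε*(a j * a l))^m)/(ε*(a j * a l))^k))
        (nhdsWithin 0 (Set.Ioi 0)) (nhds ((z j * z l * (a j * a l)^k) * rchoose α k)) :=
      fun j l => (hGlim _ (mul_pos (ha0 j) (ha0 l))).const_mul _
    have hsum := tendsto_finset_sum (Finset.univ : Finset (Fin N))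
      (fun j _ => tendsto_finset_sum (Finset.univ : Finset (Fin N)) (fun l _ => hterm j l))
    have hval : ∑ j : Fin N, ∑ l : Fin N, (z j * z l * (a j * a l)^k) * rchoose α k
        = rchoose α k := by
      have h1 : ∀ j : Fin N, ∑ l, (z j * z l * (a j * a l)^k) * rchoose α k
          = (z j * a j ^ k) * (∑ l, z l * a l ^ k) * rchoose α k := by
        intro j
        calc ∑ l, (z j * z l * (a j * a l)^k) * rchoose α k
            = ∑ l, (z j * a j ^ k) * ((z l * a l ^ k) * rchoose α k) :=
              Finset.sum_congr rfl fun l _ => by rw [mul_pow]; ring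
          _ = (z j * a j ^ k) * ((∑ l, z l * a l ^ k) * rchoose α k) := by
              rw [← Finset.mul_sum, ← Finset.sum_mul]
          _ = (z j * a j ^ k) * (∑ l, z l * a l ^ k) * rchoose α k := by ring
      simp only [h1]
      rw [← Finset.sum_mul, ← Finset.sum_mul]
      have h8 : (∑ j, z j * a j ^ k) = S k := rfl
      rw [h8, hSk]; ring
    rw [hval] at hsum
    apply Filter.Tendsto.congr' _ hsum
    filter_upwards [self_mem_nhdsWithin] with ε (hε : 0 < ε)
    have hQ0 : ∑ j : Fin N, ∑ l : Fin N,
        z j * z l * (∑ m ∈ Finset.range k, rchoose α m * (ε*(a j * a l))^m) = 0 := by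
      have h2 : ∀ j l : Fin N, z j * z l * (∑ m ∈ Finset.range k, rchoose α m * (ε*(a j * a l))^m)
          = ∑ m ∈ Finset.range k, (rchoose α m * ε^m) * ((z j * a j^m) * (z l * a l^m)) := by
        intro j l
        rw [Finset.mul_sum]
        exact Finset.sum_congr rfl fun m _ => by rw [mul_pow, mul_pow]; ring
      simp only [h2]
      have h3 : ∀ j : Fin N, ∑ l : Fin N, ∑ m ∈ Finset.range k,
          (rchoose α m * ε^m) * ((z j * a j^m) * (z l * a l^m))
          = ∑ m ∈ Finset.range k, ∑ l : Fin N,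
          (rchoose α m * ε^m) * ((z j * a j^m) * (z l * a l^m)) := fun j => Finset.sum_comm
      simp only [h3]
      rw [Finset.sum_comm]
      apply Finset.sum_eq_zero
      intro m hm
      have h4 : ∀ j : Fin N, ∑ l : Fin N, (rchoose α m * ε^m) * ((z j * a j^m) * (z l * a l^m))
          = (rchoose α m * ε^m) * ((z j * a j^m) * (∑ l, z l * a l^m)) := by
        intro j; rw [← Finset.mul_sum, ← Finset.mul_sum]
      simp only [h4]
      have h5 : (∑ l : Fin N, z l * a l ^ m) = 0 := hSm m (Finset.mem_range.mp hm)
      simp only [h5, mul_zero]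
      exact Finset.sum_const_zero
    have h6 : ∀ j l : Fin N, (z j * z l * (a j * a l)^k) * (((1 + ε*(a j * a l))^α
          - ∑ m ∈ Finset.range k, rchoose α m * (ε*(a j * a l))^m)/(ε*(a j * a l))^k)
        = (z j * (1 + ε*(a j * a l))^α * z l) / ε^k
          - (z j * z l * (∑ m ∈ Finset.range k, rchoose α m * (ε*(a j * a l))^m)) / ε^k := by
      intro j l
      rw [div_aux (z j * z l) (a j * a l) ε _ _ k (mul_pos (ha0 j) (ha0 l)).ne' hε.ne']
      congr 1
      rw [mul_div_assoc, mul_div_assoc']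
      ring
    simp only [h6]
    simp only [Finset.sum_sub_distrib]
    simp only [← Finset.sum_div]
    rw [hQ0, zero_div, sub_zero]
    try simp only [hF]
    try rfl
  -- pick a suitable ε
  have hneg : ∀ᶠ ε in nhdsWithin (0:ℝ) (Set.Ioi 0), F ε / ε^k < 0 :=
    hFlim.eventually_lt_const hCneg
  obtain ⟨ε, hεneg, hεpos⟩ := (hneg.and self_mem_nhdsWithin).exists
  refine ⟨Matrix.of fun j l => 1 + ε * (a j * a l), ?_, ?_, ?_⟩
  · refine posSemidef_of (fun j l => by simp only [Matrix.of_apply]; ring) ?_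
    intro u
    simp only [Matrix.of_apply]
    exact hz_quad ε hεpos.le u
  · intro j l
    simp only [Matrix.of_apply]
    have := mul_pos (ha0 j) (ha0 l)
    nlinarith
  · intro hPSD
    have hq := psd_quad hPSD z
    simp only [Matrix.of_apply] at hq
    have hFε : F ε < 0 := by
      have hεk : (0:ℝ) < ε^k := by positivity
      have h9 : F ε = (F ε / ε^k) * ε^k := by field_simp
      rw [h9]
      exact mul_neg_of_neg_of_pos hεneg hεk
    have h10 : F ε = ∑ j, ∑ l, z j * (1 + ε*(a j * a l))^α * z l := rfl
    rw [h10] at hFε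
    linarith

/-- FitzGerald–Horn: for `N ≥ 2`, every real power `α ≥ N − 2` preserves
positive semidefiniteness entrywise on `N × N` matrices with non-negative
entries (with `0^0 := 1`, as for `Real.rpow`), while no non-integer power
`0 < α < N − 2` does so on matrices with positive entries. -/
theorem stmt12 (N : ℕ) (hN : 2 ≤ N) :
    (∀ α : ℝ, (N : ℝ) - 2 ≤ α →
      ∀ A : Matrix (Fin N) (Fin N) ℝ, A.PosSemidef → (∀ j k, 0 ≤ A j k) →
        (Matrix.of fun j k : Fin N => A j k ^ α).PosSemidef) ∧
    (∀ α : ℝ, 0 < α → α < (N : ℝ) - 2 → (∀ m : ℤ, α ≠ (m : ℝ)) →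
      ∃ A : Matrix (Fin N) (Fin N) ℝ, A.PosSemidef ∧ (∀ j k, 0 < A j k) ∧
        ¬ (Matrix.of fun j k : Fin N => A j k ^ α).PosSemidef) := by
  constructor
  · intro α hα A hA hpos
    exact rpow_psd N α hα A hA hpos
  · intro α hα0 hαN hni
    exact exists_not_psd N α hα0 hαN hni
end

section
/- (Khare) Let R be a commutative unital ring, let t be an indeterminate, and let f(t) = Σ_{M ≥ 0} f_M t^M ∈ R[[t]] be a formal power series. For any N ≥ 1 and vectors u, v ∈ R^N, the following identity holds in R[[t]]: det f[t · u vᵀ] = Σ_{M ≥ C(N,2)} t^M Σ_{m} det(u^{∘m}) · det(v^{∘m}) · ∏_{k=0}^{N−1} f_{m_k}, where the inner sum runs over all tuples m = (m₀ < m₁ < ⋯ < m_{N−1}) of distinct non-negative integers summing to M, and u^{∘m} denotes the N × N matrix with (j,k) entry u_j^{m_{k−1}}. Here f[t · u vᵀ] is the N × N matrix over R[[t]] with (j,k) entry f(t u_j v_k) = Σ_{M ≥ 0} f_M u_j^M v_k^M t^M, and C(N,2) is the binomial coefficient N choose 2. -/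
open scoped Classical in
/-- Khare's symmetric function identity: over any commutative unital ring `R`,
for a formal power series `f = Σ_M f_M t^M` and vectors `u, v ∈ R^N`, the
coefficient of `t^M` in `det f[t · u vᵀ]` equals
`Σ_m det(u^{∘m}) det(v^{∘m}) ∏_k f_{m_k}`, summed over all strictly increasing
tuples `m = (m₀ < ⋯ < m_{N−1})` of non-negative integers with `Σ m_k = M`
(in particular the coefficient vanishes for `M < C(N,2)`). -/
theorem stmt16 (R : Type*) [CommRing R] (N : ℕ) (hN : 1 ≤ N)
    (f : PowerSeries R) (u v : Fin N → R) (M : ℕ) :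
    PowerSeries.coeff (R := R) M
      (Matrix.det (Matrix.of fun j k : Fin N =>
        PowerSeries.mk fun m : ℕ =>
          PowerSeries.coeff (R := R) m f * u j ^ m * v k ^ m)) =
    ∑ g ∈ Finset.univ.filter
        (fun g : Fin N → Fin (M + 1) =>
          StrictMono g ∧ ∑ k, (g k : ℕ) = M),
      (Matrix.of fun j k : Fin N => u j ^ (g k : ℕ)).det *
        (Matrix.of fun j k : Fin N => v j ^ (g k : ℕ)).det *
        ∏ k : Fin N, PowerSeries.coeff (R := R) (g k : ℕ) f := by
  classical
  -- abbreviation for coefficients of f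
  set F : ℕ → R := fun m => PowerSeries.coeff (R := R) m f with hF
  have hcast : ∀ (z : ℤ) (P : PowerSeries R),
      PowerSeries.coeff (R := R) M ((z : PowerSeries R) * P)
        = (z : R) * PowerSeries.coeff (R := R) M P := by
    intro z P
    rw [← zsmul_eq_mul, map_zsmul, zsmul_eq_mul]
  -- Step 1 : expand the determinant and the coefficient of the product
  have h1 : PowerSeries.coeff (R := R) M
      (Matrix.det (Matrix.of fun j k : Fin N =>
        PowerSeries.mk fun m : ℕ =>
          PowerSeries.coeff (R := R) m f * u j ^ m * v k ^ m)) =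
      ∑ l ∈ Finset.finsuppAntidiag (Finset.univ : Finset (Fin N)) M,
        ∑ σ : Equiv.Perm (Fin N),
          ((Equiv.Perm.sign σ : ℤ) : R) *
            ∏ i, (F (l i) * u (σ i) ^ (l i) * v i ^ (l i)) := by
    rw [Matrix.det_apply', map_sum]
    rw [Finset.sum_comm]
    apply Finset.sum_congr rfl
    intro σ _
    rw [show ((Equiv.Perm.sign σ : ℤˣ) : PowerSeries R) = ((Equiv.Perm.sign σ : ℤ) : PowerSeries R) by ring]
    rw [hcast, PowerSeries.coeff_prod]
    rw [Finset.mul_sum]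
    apply Finset.sum_congr rfl
    intro l _
    congr 1
    apply Finset.prod_congr rfl
    intro i _
    simp [hF]
  -- Step 2 : sum over permutations of the u-part is a determinant
  have h2 : ∀ l : Fin N →₀ ℕ,
      (∑ σ : Equiv.Perm (Fin N),
          ((Equiv.Perm.sign σ : ℤ) : R) *
            ∏ i, (F (l i) * u (σ i) ^ (l i) * v i ^ (l i)))
        = (∏ i, F (l i)) * (∏ i, v i ^ (l i)) *
            (Matrix.of fun j k : Fin N => u j ^ (l k)).det := by
    intro l
    rw [Matrix.det_apply', Finset.mul_sum]
    apply Finset.sum_congr rfl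
    intro σ _
    rw [show ((Equiv.Perm.sign σ : ℤˣ) : R) = ((Equiv.Perm.sign σ : ℤ) : R) by ring]
    rw [Finset.prod_mul_distrib, Finset.prod_mul_distrib]
    simp only [Matrix.of_apply]
    ring
  rw [h1]
  simp only [h2]
  -- Step 3 : restrict to injective tuples
  rw [← Finset.sum_filter_of_ne (p := fun l : Fin N →₀ ℕ => Function.Injective ⇑l)
      (by
        intro l hl hT
        by_contra hinj
        obtain ⟨a, b, hab, hne⟩ := Function.not_injective_iff.mp hinj
        exact hT (by
          rw [Matrix.det_zero_of_column_eq hne (fun j => by simp [hab])]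
          ring))]
  -- Step 4 : expand the v-determinant on the RHS as a permutation sum
  have hdetV : ∀ g : Fin N → Fin (M + 1),
      (Matrix.of fun j k : Fin N => v j ^ (g k : ℕ)).det
        = ∑ σ : Equiv.Perm (Fin N),
            ((Equiv.Perm.sign σ : ℤ) : R) * ∏ i, v i ^ (g (σ i) : ℕ) := by
    intro g
    rw [← Matrix.det_transpose, Matrix.det_apply']
    apply Finset.sum_congr rfl
    intro σ _
    rw [show ((Equiv.Perm.sign σ : ℤˣ) : R) = ((Equiv.Perm.sign σ : ℤ) : R) by ring]
    simp [Matrix.transpose_apply]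
  have h4 : (∑ g ∈ Finset.univ.filter
        (fun g : Fin N → Fin (M + 1) =>
          StrictMono g ∧ ∑ k, (g k : ℕ) = M),
      (Matrix.of fun j k : Fin N => u j ^ (g k : ℕ)).det *
        (Matrix.of fun j k : Fin N => v j ^ (g k : ℕ)).det *
        ∏ k : Fin N, F (g k : ℕ)) =
      ∑ p ∈ (Finset.univ.filter
        (fun g : Fin N → Fin (M + 1) =>
          StrictMono g ∧ ∑ k, (g k : ℕ) = M)) ×ˢ
          (Finset.univ : Finset (Equiv.Perm (Fin N))),
        (Matrix.of fun j k : Fin N => u j ^ (p.1 k : ℕ)).det *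
          (((Equiv.Perm.sign p.2 : ℤ) : R) * ∏ i, v i ^ (p.1 (p.2 i) : ℕ)) *
          ∏ k, F (p.1 k : ℕ) := by
    rw [Finset.sum_product]
    apply Finset.sum_congr rfl
    intro g _
    rw [hdetV g, Finset.mul_sum, Finset.sum_mul]
  rw [h4]
  -- Step 5 : bijection between pairs (g, σ) and injective tuples l
  refine (Finset.sum_bij
    (fun p _ => Finsupp.equivFunOnFinite.symm fun i => ((p.1 (p.2 i) : ℕ)))
    ?_ ?_ ?_ ?_).symm
  · -- membership
    rintro ⟨g, σ⟩ hp
    rw [Finset.mem_product, Finset.mem_filter] at hp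
    obtain ⟨⟨-, hmono, hsum⟩, -⟩ := hp
    simp only [Finset.mem_filter, Finset.mem_finsuppAntidiag]
    refine ⟨⟨?_, ?_⟩, ?_⟩
    · simpa [Finsupp.equivFunOnFinite] using (Equiv.sum_comp σ fun k => (g k : ℕ)).trans hsum
    · exact fun x _ => Finset.mem_univ x
    · intro a b hab
      simp only [Finsupp.equivFunOnFinite] at hab
      exact σ.injective (hmono.injective (Fin.val_injective hab))
  · -- injectivity
    rintro ⟨g₁, σ₁⟩ hp₁ ⟨g₂, σ₂⟩ hp₂ h
    rw [Finset.mem_product, Finset.mem_filter] at hp₁ hp₂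
    obtain ⟨⟨-, hmono₁, -⟩, -⟩ := hp₁
    obtain ⟨⟨-, hmono₂, -⟩, -⟩ := hp₂
    have h' : ∀ i, g₁ (σ₁ i) = g₂ (σ₂ i) := by
      intro i
      have := congrArg (fun l => Finsupp.equivFunOnFinite l i) h
      simp only [Equiv.apply_symm_apply] at this
      exact Fin.val_injective this
    have hrange : Set.range g₁ = Set.range g₂ := by
      rw [← Function.Surjective.range_comp σ₁.surjective g₁,
        ← Function.Surjective.range_comp σ₂.surjective g₂]
      exact congrArg Set.range (funext h')
    haveI : WellFoundedLT (Fin N) := inferInstance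
    have hg : g₁ = g₂ := (StrictMono.range_inj hmono₁ hmono₂).mp hrange
    subst hg
    have hσ : σ₁ = σ₂ := Equiv.ext fun i => hmono₁.injective (h' i)
    simp [hσ]
  · -- surjectivity
    intro l hl
    simp only [Finset.mem_filter, Finset.mem_finsuppAntidiag] at hl
    obtain ⟨⟨hsum, -⟩, hinj⟩ := hl
    have hbound : ∀ j : Fin N, l j ≤ M := by
      intro j
      rw [← hsum]
      exact Finset.single_le_sum (fun i _ => Nat.zero_le _) (Finset.mem_univ j)
    set σ₀ := Tuple.sort ⇑l with hσ₀
    have hmono : StrictMono (⇑l ∘ σ₀) :=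
      (Tuple.monotone_sort ⇑l).strictMono_of_injective (hinj.comp σ₀.injective)
    refine ⟨⟨fun k => ⟨l (σ₀ k), Nat.lt_succ_of_le (hbound _)⟩, σ₀⁻¹⟩, ?_, ?_⟩
    · rw [Finset.mem_product, Finset.mem_filter]
      refine ⟨⟨Finset.mem_univ _, ?_, ?_⟩, Finset.mem_univ _⟩
      · intro a b hab
        exact Fin.mk_lt_mk.mpr (hmono hab)
      · simpa using (Equiv.sum_comp σ₀ fun k => l k).trans hsum
    · apply Finsupp.equivFunOnFinite.symm_apply_eq.mpr
      ext i
      simp [Finsupp.equivFunOnFinite]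
  · -- values agree
    rintro ⟨g, σ⟩ hp
    rw [Finset.mem_product, Finset.mem_filter] at hp
    obtain ⟨⟨-, hmono, -⟩, -⟩ := hp
    have hcoe : ∀ i, (Finsupp.equivFunOnFinite.symm fun i => ((g (σ i) : ℕ))) i
        = (g (σ i) : ℕ) := by
      intro i; rfl
    simp only [hcoe]
    have hperm : (Matrix.of fun j k : Fin N => u j ^ (g (σ k) : ℕ)).det
        = ((Equiv.Perm.sign σ : ℤ) : R) *
            (Matrix.of fun j k : Fin N => u j ^ (g k : ℕ)).det := by
      have := Matrix.det_permute' σ (Matrix.of fun j k : Fin N => u j ^ (g k : ℕ))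
      simpa [Matrix.submatrix] using this
    rw [hperm]
    rw [show (∏ i, F ((g (σ i) : ℕ))) = ∏ k, F ((g k : ℕ)) from
      Equiv.prod_comp σ fun k => F ((g k : ℕ))]
    ring
end

section
/- (Pólya) The Gaussian kernel K(x, y) := exp(−(x − y)²) on ℝ × ℝ is totally positive: for every n ≥ 1 and all real numbers x₁ < x₂ < ⋯ < xₙ and y₁ < y₂ < ⋯ < yₙ, the determinant of the n × n matrix [exp(−(x_j − y_k)²)]_{j,k=1}^n is strictly positive. -/
open Real Matrix Finset Set Nat

/-- An exponential sum with distinct exponents vanishing at n distinct points has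
zero coefficients. -/
lemma expsum_eq_zero : ∀ (n : ℕ) (a : Fin n → ℝ), StrictMono a →
    ∀ (c : Fin n → ℝ) (t : Fin n → ℝ), StrictMono t →
    (∀ k, ∑ j, c j * Real.exp (a j * t k) = 0) → c = 0 := by
  intro n
  induction n with
  | zero => intro a _ c t _ _; ext j; exact j.elim0
  | succ n ih =>
    intro a ha c t ht h
    set b : Fin (n + 1) → ℝ := fun j => a j - a 0 with hb
    set F : ℝ → ℝ := fun s => ∑ j, c j * Real.exp (b j * s) with hF
    have hFt : ∀ k, F (t k) = 0 := by
      intro k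
      have : F (t k) = (∑ j, c j * Real.exp (a j * t k)) * Real.exp (-(a 0 * t k)) := by
        rw [hF, Finset.sum_mul]
        refine Finset.sum_congr rfl fun j _ => ?_
        rw [mul_assoc, ← Real.exp_add]
        congr 2
        simp [hb]; ring
      rw [this, h k, zero_mul]
    have hder : ∀ s : ℝ, HasDerivAt F (∑ j, c j * (Real.exp (b j * s) * b j)) s := by
      intro s
      have := HasDerivAt.fun_sum (u := Finset.univ) (x := s) fun (j : Fin (n+1)) _ =>
        ((((hasDerivAt_id s).const_mul (b j)).exp).const_mul (c j))
      simpa using this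
    -- Rolle between consecutive points
    have hroll : ∀ k : Fin n, ∃ s ∈ Ioo (t k.castSucc) (t k.succ),
        (∑ j, c j * (Real.exp (b j * s) * b j)) = 0 := by
      intro k
      have hlt : t k.castSucc < t k.succ := ht (Fin.castSucc_lt_succ (i := k))
      exact exists_hasDerivAt_eq_zero hlt
        (fun s _ => (hder s).continuousAt.continuousWithinAt)
        (by rw [hFt, hFt]) (fun s _ => hder s)
    choose s hs hs0 using hroll
    have hsm : StrictMono s := by
      intro k k' hkk
      have h1 : s k < t k.succ := (hs k).2
      have h2 : t k'.castSucc < s k' := (hs k').1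
      have h3 : t k.succ ≤ t k'.castSucc := by
        apply ht.monotone
        simp [Fin.le_def]
        omega
      linarith
    have ha' : StrictMono fun j : Fin n => a j.succ - a 0 := by
      intro i i' hii
      simp only [sub_lt_sub_iff_right]
      exact ha (Fin.succ_lt_succ_iff.mpr hii)
    have key : (fun j : Fin n => c j.succ * (a j.succ - a 0)) = 0 := by
      apply ih _ ha' _ s hsm
      intro k
      have := hs0 k
      rw [Fin.sum_univ_succ] at this
      simp only [hb] at this ⊢
      simp only [sub_self, mul_zero, zero_mul, exp_zero, mul_one, zero_add] at this
      calc ∑ j : Fin n, c j.succ * (a j.succ - a 0) * Real.exp ((a j.succ - a 0) * s k)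
          = ∑ j : Fin n, c j.succ * (Real.exp ((a j.succ - a 0) * s k) * (a j.succ - a 0)) := by
            refine Finset.sum_congr rfl fun j _ => by ring
        _ = 0 := this
    have hcs : ∀ j : Fin n, c j.succ = 0 := by
      intro j
      have h0 : c j.succ * (a j.succ - a 0) = 0 := congrFun key j
      have hpos : 0 < a j.succ - a 0 := sub_pos.mpr (ha (Fin.succ_pos j))
      rcases mul_eq_zero.mp h0 with h | h
      · exact h
      · exact absurd h hpos.ne'
    have hc0 : c 0 = 0 := by
      have := h 0
      rw [Fin.sum_univ_succ] at this
      simp only [hcs, zero_mul, Finset.sum_const_zero, add_zero] at this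
      exact (mul_eq_zero.mp this).resolve_right (Real.exp_ne_zero _)
    ext j
    refine Fin.cases ?_ ?_ j
    · exact hc0
    · exact hcs

lemma det_expker_ne_zero (n : ℕ) (x y : Fin n → ℝ) (hx : StrictMono x) (hy : StrictMono y) :
    (Matrix.of fun j k : Fin n => Real.exp (x j * y k)).det ≠ 0 := by
  intro h
  obtain ⟨v, hv, hmul⟩ := Matrix.exists_mulVec_eq_zero_iff.mpr h
  apply hv
  apply expsum_eq_zero n y hy v x hx
  intro k
  have := congrFun hmul k
  simp only [Matrix.mulVec, dotProduct, Matrix.of_apply, Pi.zero_apply] at this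
  rw [← this]
  refine Finset.sum_congr rfl fun j _ => by ring

lemma gram_psd (n : ℕ) (x : Fin n → ℝ) :
    (Matrix.of fun j k : Fin n => Real.exp (x j * x k)).PosSemidef := by
  refine Matrix.PosSemidef.of_dotProduct_mulVec_nonneg ?_ ?_
  · ext j k
    simp [Matrix.conjTranspose_apply, mul_comm]
  · intro v
    have hsummable : ∀ j k : Fin n,
        Summable (fun m : ℕ => v j * v k * ((x j * x k) ^ m / m !)) := fun j k =>
      (Real.summable_pow_div_factorial (x j * x k)).mul_left _
    have hexp : ∀ j k : Fin n, v j * (Real.exp (x j * x k) * v k)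
        = ∑' m : ℕ, v j * v k * ((x j * x k) ^ m / m !) := by
      intro j k
      rw [Real.exp_eq_exp_ℝ, NormedSpace.exp_eq_tsum_div]
      rw [← tsum_mul_right, ← tsum_mul_left]
      refine tsum_congr fun m => by ring
    have : dotProduct (star v) ((Matrix.of fun j k : Fin n => Real.exp (x j * x k)) *ᵥ v)
        = ∑' m : ℕ, (∑ j, v j * x j ^ m) ^ 2 / m ! := by
      simp only [dotProduct, Matrix.mulVec, Matrix.of_apply, star, Pi.star_apply, star_trivial]
      calc ∑ j, v j * ∑ k, Real.exp (x j * x k) * v k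
          = ∑ j, ∑ k, v j * (Real.exp (x j * x k) * v k) := by
            simp [Finset.mul_sum]
        _ = ∑ j, ∑ k, ∑' m : ℕ, v j * v k * ((x j * x k) ^ m / m !) := by
            refine Finset.sum_congr rfl fun j _ => Finset.sum_congr rfl fun k _ => hexp j k
        _ = ∑ j : Fin n, ∑' m : ℕ, ∑ k, v j * v k * ((x j * x k) ^ m / m !) := by
            refine Finset.sum_congr rfl fun j _ => (Summable.tsum_finsetSum fun k _ => hsummable j k).symm
        _ = ∑' m : ℕ, ∑ j, ∑ k, v j * v k * ((x j * x k) ^ m / m !) := by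
            refine (Summable.tsum_finsetSum fun j _ => ?_).symm
            exact (hasSum_sum fun k _ => (hsummable j k).hasSum).summable
        _ = ∑' m : ℕ, (∑ j, v j * x j ^ m) ^ 2 / m ! := by
            refine tsum_congr fun m => ?_
            rw [sq, Finset.sum_mul_sum, Finset.sum_div]
            refine Finset.sum_congr rfl fun j _ => ?_
            rw [Finset.sum_div]
            refine Finset.sum_congr rfl fun k _ => ?_
            rw [mul_pow]
            ring
    rw [this]
    exact tsum_nonneg fun m => div_nonneg (sq_nonneg _) (by positivity)

lemma gram_det_pos (n : ℕ) (x : Fin n → ℝ) (hx : StrictMono x) :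
    0 < (Matrix.of fun j k : Fin n => Real.exp (x j * x k)).det := by
  have hpsd := gram_psd n x
  have hne := det_expker_ne_zero n x x hx hx
  have hnonneg : 0 ≤ (Matrix.of fun j k : Fin n => Real.exp (x j * x k)).det := by
    rw [hpsd.1.det_eq_prod_eigenvalues]
    exact Finset.prod_nonneg fun i _ => hpsd.eigenvalues_nonneg i
  exact hnonneg.lt_of_ne' hne

lemma det_expker_pos (n : ℕ) (x y : Fin n → ℝ) (hx : StrictMono x) (hy : StrictMono y) :
    0 < (Matrix.of fun j k : Fin n => Real.exp (x j * y k)).det := by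
  set F : ℝ → ℝ := fun s =>
    (Matrix.of fun j k : Fin n => Real.exp (x j * ((1 - s) * y k + s * x k))).det with hF
  have hz : ∀ s ∈ Icc (0:ℝ) 1, StrictMono fun k => (1 - s) * y k + s * x k := by
    intro s hs k k' hkk
    show (1 - s) * y k + s * x k < (1 - s) * y k' + s * x k'
    rcases eq_or_lt_of_le hs.1 with h0 | h0
    · rw [← h0]
      simpa using hy hkk
    · have h1 : (1 - s) * y k ≤ (1 - s) * y k' :=
        mul_le_mul_of_nonneg_left (hy hkk).le (by linarith [hs.2])
      have h2 : s * x k < s * x k' := mul_lt_mul_of_pos_left (hx hkk) h0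
      linarith
  have hFne : ∀ s ∈ Icc (0:ℝ) 1, F s ≠ 0 := fun s hs =>
    det_expker_ne_zero n x _ hx (hz s hs)
  have hFcont : Continuous F := by
    apply Continuous.matrix_det
    apply continuous_matrix
    intro j k
    simp only [Matrix.of_apply]
    fun_prop
  have hF1 : 0 < F 1 := by
    have : F 1 = (Matrix.of fun j k : Fin n => Real.exp (x j * x k)).det := by
      simp [hF]
    rw [this]
    exact gram_det_pos n x hx
  have hF0 : F 0 = (Matrix.of fun j k : Fin n => Real.exp (x j * y k)).det := by
    simp [hF]
  by_contra hle
  push_neg at hle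
  rw [← hF0] at hle
  have hlt : F 0 < 0 := lt_of_le_of_ne hle (hFne 0 ⟨le_refl 0, zero_le_one⟩)
  have := intermediate_value_Icc (zero_le_one' ℝ) hFcont.continuousOn
  have h0mem : (0:ℝ) ∈ Icc (F 0) (F 1) := ⟨hlt.le, hF1.le⟩
  obtain ⟨s, hs, hFs⟩ := this h0mem
  exact hFne s hs hFs

/-- Pólya: the Gaussian kernel `K(x,y) = exp(−(x−y)²)` is totally positive: for
any `n ≥ 1` and strictly increasing tuples `x₁ < ⋯ < xₙ`, `y₁ < ⋯ < yₙ`, the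
matrix `[exp(−(x_j − y_k)²)]` has strictly positive determinant. -/
theorem stmt17 (n : ℕ) (hn : 1 ≤ n) (x y : Fin n → ℝ)
    (hx : StrictMono x) (hy : StrictMono y) :
    0 < (Matrix.of fun j k : Fin n =>
      Real.exp (-(x j - y k) ^ 2)).det := by
  have hfac : (Matrix.of fun j k : Fin n => Real.exp (-(x j - y k) ^ 2))
      = Matrix.of fun j k : Fin n => Real.exp (-(y k) ^ 2) *
          (Real.exp (-(x j) ^ 2) * Real.exp ((2 * x j) * y k)) := by
    ext j k
    simp only [Matrix.of_apply, ← Real.exp_add]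
    congr 1
    ring
  rw [hfac]
  rw [show (Matrix.of fun j k : Fin n => Real.exp (-(y k) ^ 2) *
          (Real.exp (-(x j) ^ 2) * Real.exp ((2 * x j) * y k)))
      = Matrix.of (fun j k : Fin n => Real.exp (-(y k) ^ 2) *
          (Matrix.of fun j k : Fin n => Real.exp (-(x j) ^ 2) *
            (Matrix.of fun j k : Fin n => Real.exp ((2 * x j) * y k)) j k) j k) from rfl]
  rw [Matrix.det_mul_row]
  rw [show (Matrix.of fun j k : Fin n => Real.exp (-(x j) ^ 2) *
            (Matrix.of fun j k : Fin n => Real.exp ((2 * x j) * y k)) j k)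
      = Matrix.of (fun j k : Fin n => Real.exp (-(x j) ^ 2) *
            (Matrix.of fun j k : Fin n => Real.exp ((2 * x j) * y k)) j k) from rfl]
  rw [Matrix.det_mul_column]
  have hx2 : StrictMono fun j => 2 * x j := fun a b hab => by
    have := hx hab
    show 2 * x a < 2 * x b
    linarith
  have hmain := det_expker_pos n (fun j => 2 * x j) y hx2 hy
  have hp1 : 0 < ∏ k : Fin n, Real.exp (-(y k) ^ 2) :=
    Finset.prod_pos fun k _ => Real.exp_pos _
  have hp2 : 0 < ∏ j : Fin n, Real.exp (-(x j) ^ 2) :=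
    Finset.prod_pos fun j _ => Real.exp_pos _
  positivity
end

section
/- (Guillot–Rajaratnam) Let G be a simple graph on the vertex set {1, …, N}. For an N × N matrix A = [a_{jk}], let A_G denote the matrix with (A_G)_{jk} = a_{jk} if j = k or {j,k} is an edge of G, and (A_G)_{jk} = 0 otherwise. Then A_G is positive definite for every real symmetric positive definite N × N matrix A if and only if every connected component of G is a complete graph (i.e., G is a disjoint union of complete graphs). -/
open Matrix
open Matrix

lemma gr_triple {V : Type*} {G : SimpleGraph V} :
    ∀ {j k : V}, G.Walk j k → j ≠ k → ¬ G.Adj j k →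
      ∃ a b c, G.Adj a b ∧ G.Adj b c ∧ ¬ G.Adj a c ∧ a ≠ c := by
  intro j k p
  induction p with
  | nil => intro hne _; exact absurd rfl hne
  | @cons u v w h q ih =>
    intro hne hna
    by_cases hadj : G.Adj v w
    · exact ⟨u, v, w, h, hadj, hna, hne⟩
    · by_cases hvw : v = w
      · subst hvw; exact absurd h hna
      · exact ih hvw hadj

lemma gr_posdef {N : ℕ} (u : Fin N → ℝ)
    (hui : ∀ i, (u i) ^ 2 ≤ 1) :
    (Matrix.of fun i j : Fin N => if i = j then (1:ℝ) else (4/5) * u i * u j).PosDef := by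
  classical
  set A : Matrix (Fin N) (Fin N) ℝ :=
    Matrix.of fun i j : Fin N => if i = j then (1:ℝ) else (4/5) * u i * u j with hA
  refine Matrix.PosDef.of_dotProduct_mulVec_pos ?_ ?_
  · ext i j
    simp only [Matrix.conjTranspose_apply, Matrix.of_apply, hA, star_trivial]
    by_cases hij : i = j
    · subst hij; simp
    · rw [if_neg (Ne.symm hij), if_neg hij]; ring
  · intro x hx
    have hxs : star x = x := by simp
    have key : ∀ i, (A *ᵥ x) i =
        (1 - 4/5 * (u i)^2) * x i + 4/5 * u i * (∑ j, u j * x j) := by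
      intro i
      have h1 : ∀ j, A i j * x j =
          (if i = j then (1 - 4/5*(u i)^2) * x j else 0) + 4/5 * u i * (u j * x j) := by
        intro j
        by_cases hij : i = j
        · subst hij; simp [hA]; ring
        · simp [hA, hij]; ring
      simp only [Matrix.mulVec, dotProduct]
      rw [Finset.sum_congr rfl (fun j _ => h1 j), Finset.sum_add_distrib,
        Finset.sum_ite_eq, ← Finset.mul_sum]
      simp
    have expand : x ⬝ᵥ A *ᵥ x =
        (∑ i, (1 - 4/5*(u i)^2) * (x i)^2) + 4/5 * (∑ j, u j * x j)^2 := by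
      simp only [dotProduct, key]
      calc ∑ i, x i * ((1 - 4/5*(u i)^2) * x i + 4/5 * u i * (∑ j, u j * x j))
          = ∑ i, ((1 - 4/5*(u i)^2) * (x i)^2
              + (4/5 * (∑ j, u j * x j)) * (u i * x i)) := by
            apply Finset.sum_congr rfl; intro i _; ring
        _ = (∑ i, (1 - 4/5*(u i)^2) * (x i)^2)
              + (4/5 * (∑ j, u j * x j)) * (∑ i, u i * x i) := by
            rw [Finset.sum_add_distrib, ← Finset.mul_sum]
        _ = _ := by ring
    have hxpos : 0 < ∑ i, (x i)^2 := by
      obtain ⟨i, hi⟩ := Function.ne_iff.mp hx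
      exact Finset.sum_pos' (fun j _ => sq_nonneg _)
        ⟨i, Finset.mem_univ i, pow_two_pos_of_ne_zero (by simpa using hi : x i ≠ 0)⟩
    have hsum : (1/5:ℝ) * ∑ i, (x i)^2 ≤ ∑ i, (1 - 4/5*(u i)^2) * (x i)^2 := by
      rw [Finset.mul_sum]
      exact Finset.sum_le_sum fun i _ =>
        mul_le_mul_of_nonneg_right (by nlinarith [hui i]) (sq_nonneg _)
    show 0 < star x ⬝ᵥ A *ᵥ x
    rw [hxs, expand]
    nlinarith [sq_nonneg (∑ j, u j * x j), hxpos, hsum]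


open scoped Classical in
lemma gr_back {N : ℕ} (G : SimpleGraph (Fin N))
    (hcomp : ∀ j k : Fin N, G.Reachable j k → j ≠ k → G.Adj j k)
    (A : Matrix (Fin N) (Fin N) ℝ) (hA : A.PosDef) :
    (Matrix.of fun j k : Fin N =>
        if j = k ∨ G.Adj j k then A j k else 0).PosDef := by
  classical
  haveI : Fintype G.ConnectedComponent := Fintype.ofFinite _
  set B : Matrix (Fin N) (Fin N) ℝ :=
    Matrix.of fun j k : Fin N => if j = k ∨ G.Adj j k then A j k else 0 with hB
  have entry : ∀ j k, B j k =
      if G.connectedComponentMk j = G.connectedComponentMk k then A j k else 0 := by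
    intro j k
    have hiff : (j = k ∨ G.Adj j k) ↔
        G.connectedComponentMk j = G.connectedComponentMk k := by
      constructor
      · rintro (rfl | hadj)
        · rfl
        · exact SimpleGraph.ConnectedComponent.eq.mpr hadj.reachable
      · intro h
        by_cases hjk : j = k
        · exact Or.inl hjk
        · exact Or.inr (hcomp j k (SimpleGraph.ConnectedComponent.eq.mp h) hjk)
    simp only [hB, Matrix.of_apply]
    exact if_congr hiff rfl rfl
  have hAsymm : ∀ j k, A k j = A j k := by
    intro j k
    have := congrFun (congrFun hA.1 j) k
    simpa [Matrix.conjTranspose_apply] using this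
  refine Matrix.PosDef.of_dotProduct_mulVec_pos ?_ ?_
  · ext j k
    simp only [Matrix.conjTranspose_apply, star_trivial]
    rw [entry, entry, hAsymm]
    by_cases h : G.connectedComponentMk j = G.connectedComponentMk k
    · rw [if_pos h, if_pos h.symm]
    · rw [if_neg h, if_neg (fun hh => h hh.symm)]
  · intro x hx
    have hxs : star x = x := by simp
    set z : G.ConnectedComponent → (Fin N → ℝ) :=
      fun C i => if G.connectedComponentMk i = C then x i else 0 with hz
    have hzz : ∀ C i j, z C i * (A i j * z C j) =
        (if G.connectedComponentMk i = C then (1:ℝ) else 0) *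
        (if G.connectedComponentMk i = G.connectedComponentMk j
          then x i * (A i j * x j) else 0) := by
      intro C i j
      by_cases h1 : G.connectedComponentMk i = C
      · by_cases h2 : G.connectedComponentMk j = C
        · have h3 : G.connectedComponentMk i = G.connectedComponentMk j := h1.trans h2.symm
          simp [hz, h1, h2, h3]
        · have h3 : G.connectedComponentMk i ≠ G.connectedComponentMk j :=
            fun h => h2 (h ▸ h1)
          have h4 : C ≠ G.connectedComponentMk j := fun hh => h2 hh.symm
          simp [hz, h1, h2, h3, h4]
      · simp [hz, h1]
    have claim : x ⬝ᵥ B *ᵥ x = ∑ C : G.ConnectedComponent, z C ⬝ᵥ A *ᵥ z C := by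
      have rhs : ∀ C, z C ⬝ᵥ A *ᵥ z C = ∑ i, ∑ j, z C i * (A i j * z C j) := by
        intro C
        simp only [dotProduct, Matrix.mulVec, Finset.mul_sum]
      simp only [rhs]
      rw [Finset.sum_comm]
      have lhs : x ⬝ᵥ B *ᵥ x = ∑ i, ∑ j, x i * (B i j * x j) := by
        simp only [dotProduct, Matrix.mulVec, Finset.mul_sum]
      rw [lhs]
      apply Finset.sum_congr rfl; intro i _
      rw [Finset.sum_comm]
      apply Finset.sum_congr rfl; intro j _
      rw [Finset.sum_congr rfl (fun C _ => hzz C i j), ← Finset.sum_mul,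
        Finset.sum_ite_eq]
      simp only [Finset.mem_univ, if_true, one_mul, entry]
      by_cases h : G.connectedComponentMk i = G.connectedComponentMk j
      · simp [h]
      · simp [h]
    show 0 < star x ⬝ᵥ B *ᵥ x
    rw [hxs, claim]
    obtain ⟨i0, hi0⟩ := Function.ne_iff.mp hx
    have hi0' : x i0 ≠ 0 := by simpa using hi0
    apply Finset.sum_pos'
    · intro C _
      have := hA.posSemidef.dotProduct_mulVec_nonneg (z C)
      simpa using this
    · refine ⟨G.connectedComponentMk i0, Finset.mem_univ _, ?_⟩
      have hzne : z (G.connectedComponentMk i0) ≠ 0 := by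
        intro h
        have := congrFun h i0
        simp [hz] at this
        exact hi0' this
      have := hA.dotProduct_mulVec_pos hzne
      simpa using this


open scoped Classical in
lemma gr_fwd {N : ℕ} (G : SimpleGraph (Fin N)) (a b c : Fin N)
    (hab : G.Adj a b) (hbc : G.Adj b c) (hac : ¬ G.Adj a c) (hacne : a ≠ c)
    (u : Fin N → ℝ) (hu : u = fun i => if i = a ∨ i = b ∨ i = c then (1:ℝ) else 0) :
    ¬ (Matrix.of fun i j : Fin N => if i = j ∨ G.Adj i j then
        (if i = j then (1:ℝ) else (4/5) * u i * u j) else 0).PosDef := by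
  classical
  intro hPD
  set M : Matrix (Fin N) (Fin N) ℝ :=
    Matrix.of fun i j : Fin N => if i = j ∨ G.Adj i j then
        (if i = j then (1:ℝ) else (4/5) * u i * u j) else 0 with hM
  have hba := hab.symm
  have hcb := hbc.symm
  have hca : ¬ G.Adj c a := fun h => hac h.symm
  set y : Fin N → ℝ :=
    fun i => if i = a then (5:ℝ) else if i = b then -7 else if i = c then 5 else 0 with hy
  have hya : y a = 5 := by simp [hy]
  have hyb : y b = -7 := by simp [hy, Ne.symm hab.ne]
  have hyc : y c = 5 := by simp [hy, Ne.symm hacne, Ne.symm hbc.ne]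
  have hyne : y ≠ 0 := by
    intro h
    have := congrFun h a
    rw [hya] at this
    norm_num at this
  have hsum3 : ∀ f : Fin N → ℝ, (∀ j, j ≠ a → j ≠ b → j ≠ c → f j = 0) →
      ∑ j, f j = f a + f b + f c := by
    intro f hf
    have h1 : ∑ j, f j = ∑ j ∈ ({a, b, c} : Finset (Fin N)), f j := by
      symm
      apply Finset.sum_subset (Finset.subset_univ _)
      intro j _ hj
      simp only [Finset.mem_insert, Finset.mem_singleton] at hj
      push_neg at hj
      exact hf j hj.1 hj.2.1 hj.2.2
    rw [h1, Finset.sum_insert (by simp [hab.ne, hacne]),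
      Finset.sum_insert (by simp [hbc.ne]), Finset.sum_singleton]
    ring
  have inner : ∀ i, (M *ᵥ y) i = M i a * 5 + M i b * (-7) + M i c * 5 := by
    intro i
    show ∑ j, M i j * y j = _
    rw [hsum3 (fun j => M i j * y j)
      (fun j h1 h2 h3 => by simp [hy, h1, h2, h3]), hya, hyb, hyc]
  have outer : y ⬝ᵥ M *ᵥ y =
      5*(M a a*5 + M a b*(-7) + M a c*5) + (-7)*(M b a*5 + M b b*(-7) + M b c*5)
        + 5*(M c a*5 + M c b*(-7) + M c c*5) := by
    show ∑ i, y i * (M *ᵥ y) i = _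
    rw [hsum3 (fun i => y i * (M *ᵥ y) i)
      (fun i h1 h2 h3 => by simp [hy, h1, h2, h3]),
      inner a, inner b, inner c, hya, hyb, hyc]
  have eaa : M a a = 1 := by simp [hM]
  have ebb : M b b = 1 := by simp [hM]
  have ecc : M c c = 1 := by simp [hM]
  have eab : M a b = 4/5 := by simp [hM, hab, hab.ne, hu]
  have eba : M b a = 4/5 := by simp [hM, hba, Ne.symm hab.ne, hu]
  have ebc : M b c = 4/5 := by simp [hM, hbc, hbc.ne, hu]
  have ecb : M c b = 4/5 := by simp [hM, hcb, Ne.symm hbc.ne, hu]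
  have eac : M a c = 0 := by simp [hM, hac, hacne]
  have eca : M c a = 0 := by simp [hM, hca, Ne.symm hacne]
  have hval : y ⬝ᵥ M *ᵥ y = -13 := by
    rw [outer, eaa, ebb, ecc, eab, eba, ebc, ecb, eac, eca]
    norm_num
  have hq := hPD.dotProduct_mulVec_pos hyne
  have hxs : star y = y := by simp
  rw [hxs] at hq
  rw [hval] at hq
  norm_num at hq

open scoped Classical in
/-- Guillot–Rajaratnam: thresholding with respect to a graph `G` preserves
positive definiteness for all positive definite matrices iff every connected
component of `G` is complete (any two distinct vertices in the same component
are adjacent). -/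
theorem stmt19 (N : ℕ) (G : SimpleGraph (Fin N)) :
    (∀ A : Matrix (Fin N) (Fin N) ℝ, A.PosDef →
      (Matrix.of fun j k : Fin N =>
        if j = k ∨ G.Adj j k then A j k else 0).PosDef) ↔
    (∀ j k : Fin N, G.Reachable j k → j ≠ k → G.Adj j k) := by
  classical
  constructor
  · intro h
    by_contra hcomp
    push_neg at hcomp
    obtain ⟨j, k, hr, hne, hna⟩ := hcomp
    obtain ⟨p⟩ := hr
    obtain ⟨a, b, c, hab, hbc, hac, hacne⟩ := gr_triple p hne hna
    set u : Fin N → ℝ := fun i => if i = a ∨ i = b ∨ i = c then (1:ℝ) else 0 with hu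
    have hApd : (Matrix.of fun i j : Fin N =>
        if i = j then (1:ℝ) else (4/5) * u i * u j).PosDef :=
      gr_posdef u (by intro i; rw [hu]; dsimp only; split_ifs <;> norm_num)
    have hB := h _ hApd
    have key : (Matrix.of fun j k : Fin N => if j = k ∨ G.Adj j k then
          (Matrix.of fun i j : Fin N => if i = j then (1:ℝ) else (4/5) * u i * u j) j k
          else 0) =
        (Matrix.of fun i j : Fin N => if i = j ∨ G.Adj i j then
          (if i = j then (1:ℝ) else (4/5) * u i * u j) else 0) := by
      ext i j
      simp [Matrix.of_apply]
    rw [key] at hB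
    exact gr_fwd G a b c hab hbc hac hacne u hu hB
  · intro hcomp A hA
    exact gr_back G hcomp A hA
end
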